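/- arXiv:0708.2268 — 3 statements merged into one kernel-verified Lean document; each statement's English description precedes it below -/
import Mathlib

section
/- Let τ < σ be cones in V = Λ ⊗ ℝ with dim τ = dim σ − 1 (τ a proper face of σ). Then the quotient lattice Λ_σ/Λ_τ is isomorphic to ℤ, the image of σ in the one-dimensional space V_σ/V_τ is contained in a unique closed half-line, and there is a unique generator u_{σ/τ} of Λ_σ/Λ_τ lying in this half-line (the primitive normal vector of σ relative to τ). -/
open scoped BigOperators

namespace TropFan

/-- `V N` is the real vector space `ℝ^N`. -/
abbrev V (N : ℕ) := Fin N → ℝ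

/-- The lattice `ℤ^N ⊆ ℝ^N`, as an additive subgroup. -/
def latticePts (N : ℕ) : AddSubgroup (V N) where
  carrier := {x | ∀ i, ∃ m : ℤ, x i = (m : ℝ)}
  add_mem' := by
    intro a b ha hb i
    obtain ⟨m, hm⟩ := ha i
    obtain ⟨k, hk⟩ := hb i
    exact ⟨m + k, by push_cast [Pi.add_apply]; rw [hm, hk]⟩
  zero_mem' := fun i => ⟨0, by simp⟩
  neg_mem' := by
    intro a ha i
    obtain ⟨m, hm⟩ := ha i
    exact ⟨-m, by push_cast [Pi.neg_apply]; rw [hm]⟩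

/-- Evaluation of the integral linear form with coefficients `c` on `x`. -/
def evalForm {N : ℕ} (c : Fin N → ℤ) (x : V N) : ℝ := ∑ i, (c i : ℝ) * x i

/-- A (rational polyhedral) cone in `ℝ^N`: a subset cut out by finitely many
integral linear equalities and inequalities. -/
def IsCone {N : ℕ} (σ : Set (V N)) : Prop :=
  ∃ (n m : ℕ) (f : Fin n → Fin N → ℤ) (g : Fin m → Fin N → ℤ),
    σ = {x | (∀ i, evalForm (f i) x = 0) ∧ ∀ j, 0 ≤ evalForm (g j) x}

/-- `τ` is a face of `σ` (obtained by turning some defining inequalities into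
equalities; equivalently, cut out on `σ` by an integral supporting form). -/
def IsFace {N : ℕ} (τ σ : Set (V N)) : Prop :=
  IsCone τ ∧ IsCone σ ∧ τ ⊆ σ ∧
    ∃ c : Fin N → ℤ, (∀ x ∈ σ, 0 ≤ evalForm c x) ∧ τ = {x ∈ σ | evalForm c x = 0}

/-- `V_σ`, the linear span of the cone `σ`. -/
def coneSpan {N : ℕ} (σ : Set (V N)) : Submodule ℝ (V N) := Submodule.span ℝ σ

/-- The dimension of a cone. -/
noncomputable def coneDim {N : ℕ} (σ : Set (V N)) : ℕ := Module.finrank ℝ ↥(coneSpan σ)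

/-- `Λ_σ = V_σ ∩ ℤ^N`. -/
def coneLattice {N : ℕ} (σ : Set (V N)) : AddSubgroup (V N) :=
  (coneSpan σ).toAddSubgroup ⊓ latticePts N

/-- `u ∈ Λ_σ` represents the primitive normal vector `u_{σ/τ}` of `σ` relative to
its codimension-one face `τ`: together with `Λ_τ` it generates `Λ_σ`, and it lies
on the `σ`-side of `V_τ`. -/
def IsNormalVector {N : ℕ} (τ σ : Set (V N)) (u : V N) : Prop :=
  u ∈ coneLattice σ ∧
  (∀ x ∈ coneLattice σ, ∃ k : ℤ, x - k • u ∈ coneLattice τ) ∧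
  ∃ g : (V N) →ₗ[ℝ] ℝ, (∀ x ∈ coneSpan τ, g x = 0) ∧ (∀ x ∈ σ, 0 ≤ g x) ∧ 0 < g u

/-- A fan in `ℝ^N`: a finite set of cones, closed under passing to faces, such
that the intersection of any two of its cones is a face of each. -/
structure Fan (N : ℕ) where
  cones : Set (Set (V N))
  finite : cones.Finite
  isCone : ∀ σ ∈ cones, IsCone σ
  faces_mem : ∀ σ ∈ cones, ∀ τ, IsFace τ σ → τ ∈ cones
  inter_face : ∀ σ₁ ∈ cones, ∀ σ₂ ∈ cones, IsFace (σ₁ ∩ σ₂) σ₁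

/-- The support `|X|` of a fan: the union of its cones. -/
def Fan.support {N : ℕ} (X : Fan N) : Set (V N) := ⋃ σ ∈ X.cones, σ

/-- `X^{(k)}`, the set of `k`-dimensional cones of `X`. -/
def Fan.conesOfDim {N : ℕ} (X : Fan N) (k : ℕ) : Set (Set (V N)) :=
  {σ | σ ∈ X.cones ∧ coneDim σ = k}

/-- A fan is pure of dimension `n` if every cone is contained in an
`n`-dimensional cone of the fan. -/
def Fan.IsPure {N : ℕ} (X : Fan N) (n : ℕ) : Prop :=
  ∀ σ ∈ X.cones, ∃ σ', σ' ∈ X.conesOfDim n ∧ σ ⊆ σ'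

/-- The balancing condition for a fan `X` of pure dimension `n` with weights `w`:
for each codimension-one cone `τ` and for each choice of primitive normal vectors
`u σ = u_{σ/τ}`, the weighted sum `Σ_{σ > τ} w(σ) • u_{σ/τ}` vanishes modulo `V_τ`. -/
def IsBalanced {N : ℕ} (X : Fan N) (n : ℕ) (w : Set (V N) → ℤ) : Prop :=
  ∀ τ ∈ X.conesOfDim (n - 1),
    ∀ u : Set (V N) → V N,
      (∀ σ ∈ X.conesOfDim n, IsFace τ σ → τ ≠ σ → IsNormalVector τ σ (u σ)) →
      (∑ᶠ σ ∈ {σ | σ ∈ X.conesOfDim n ∧ IsFace τ σ ∧ τ ≠ σ}, w σ • u σ) ∈ coneSpan τ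

/-- A weighted fan of dimension `n`: a pure `n`-dimensional fan together with
positive integer weights on its `n`-dimensional cones. -/
structure WeightedFan (N n : ℕ) extends Fan N where
  pure : toFan.IsPure n
  weight : Set (V N) → ℤ
  weight_pos : ∀ σ ∈ toFan.conesOfDim n, 0 < weight σ

/-- A tropical fan is a weighted fan satisfying the balancing condition. -/
def WeightedFan.IsTropical {N n : ℕ} (X : WeightedFan N n) : Prop :=
  IsBalanced X.toFan n X.weight

/-- `Y` is a subfan of `X`. -/
def IsSubfan {N : ℕ} (Y X : Fan N) : Prop := ∀ σ ∈ Y.cones, ∃ σ' ∈ X.cones, σ ⊆ σ'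

/-- `σ'` is the inclusion-minimal cone `C_{Y,X}(σ)` of `X` containing `σ`. -/
def IsMinConeOver {N : ℕ} (X : Fan N) (σ σ' : Set (V N)) : Prop :=
  σ' ∈ X.cones ∧ σ ⊆ σ' ∧ ∀ σ'' ∈ X.cones, σ ⊆ σ'' → σ' ⊆ σ''

/-- `(Y, ω_Y)` is a refinement of `(X, ω_X)`. -/
def IsRefinement {N n : ℕ} (Y X : WeightedFan N n) : Prop :=
  IsSubfan Y.toFan X.toFan ∧
  Y.toFan.support = X.toFan.support ∧
  ∀ σ ∈ Y.toFan.conesOfDim n, ∀ σ', IsMinConeOver X.toFan σ σ' → Y.weight σ = X.weight σ'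

/-- A tropical fan is irreducible if there is no (nonempty) tropical fan of the
same dimension whose support is a proper subset of its support. -/
def IsIrreducible {N n : ℕ} (X : WeightedFan N n) : Prop :=
  ¬ ∃ Y : WeightedFan N n, Y.IsTropical ∧ (Y.toFan.conesOfDim n).Nonempty ∧
      Y.toFan.support ⊂ X.toFan.support

/-- A simplicial (rational) cone: the nonnegative span of finitely many linearly
independent lattice vectors. -/
def IsSimplicialCone {N : ℕ} (σ : Set (V N)) : Prop :=
  ∃ (k : ℕ) (v : Fin k → V N), LinearIndependent ℝ v ∧ (∀ i, v i ∈ latticePts N) ∧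
    σ = {x | ∃ c : Fin k → ℝ, (∀ i, 0 ≤ c i) ∧ x = ∑ i, c i • v i}

/-- A marked fan: a pure `n`-dimensional simplicial fan together with a choice
of an integral generator (marking) of each of its edges. -/
structure MarkedFan (N n : ℕ) extends Fan N where
  pure : toFan.IsPure n
  simplicial : ∀ σ ∈ cones, IsSimplicialCone σ
  mark : Set (V N) → V N
  mark_mem : ∀ σ ∈ toFan.conesOfDim 1, mark σ ∈ σ ∧ mark σ ≠ 0 ∧ mark σ ∈ latticePts N

/-- The sublattice `Λ̃_σ ⊆ Λ_σ` generated by the markings of the edges of `σ`. -/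
def MarkedFan.markLattice {N n : ℕ} (X : MarkedFan N n) (σ : Set (V N)) : AddSubgroup (V N) :=
  AddSubgroup.closure (X.mark '' {e | e ∈ X.toFan.conesOfDim 1 ∧ IsFace e σ})

/-- The weight `ω(σ) = |Λ_σ / Λ̃_σ|` of a cone of a marked fan. -/
noncomputable def MarkedFan.weight {N n : ℕ} (X : MarkedFan N n) (σ : Set (V N)) : ℕ :=
  (X.markLattice σ).relIndex (coneLattice σ)

/-- `v = v_{σ/τ}`: `v` is the marking of an edge of `σ` which is not a face of `τ`. -/
def MarkedFan.IsRelMark {N n : ℕ} (X : MarkedFan N n) (σ τ : Set (V N)) (v : V N) : Prop :=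
  ∃ e, e ∈ X.toFan.conesOfDim 1 ∧ IsFace e σ ∧ ¬ IsFace e τ ∧ v = X.mark e


def evalFormL {N : ℕ} (c : Fin N → ℤ) : V N →ₗ[ℝ] ℝ where
  toFun := evalForm c
  map_add' x y := by
    simp [evalForm, mul_add, Finset.sum_add_distrib]
  map_smul' r x := by
    simp only [evalForm, RingHom.id_apply, Finset.mul_sum, Pi.smul_apply, smul_eq_mul]
    exact Finset.sum_congr rfl fun i _ => by ring

@[simp] lemma evalFormL_apply {N : ℕ} (c : Fin N → ℤ) (x : V N) :
    evalFormL c x = evalForm c x := rfl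

lemma transfer_rat {ι : Type} [Fintype ι] {N : ℕ} (A : ι → Fin N → ℚ) (c : Fin N → ℚ)
    (hQ : ∀ x : Fin N → ℚ, (∀ i, ∑ j, A i j * x j = 0) → ∑ j, c j * x j = 0) :
    ∃ lam : ι → ℚ, ∀ j, c j = ∑ i, lam i * A i j := by
  classical
  let row : (Fin N → ℚ) → ((Fin N → ℚ) →ₗ[ℚ] ℚ) := fun a =>
    { toFun := fun x => ∑ j, a j * x j
      map_add' := fun x y => by simp [mul_add, Finset.sum_add_distrib]
      map_smul' := fun r x => by
        simp only [RingHom.id_apply, Finset.mul_sum, Pi.smul_apply, smul_eq_mul]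
        exact Finset.sum_congr rfl fun i _ => by ring }
  let Φ : (Fin N → ℚ) →ₗ[ℚ] (ι → ℚ) := LinearMap.pi (fun i => row (A i))
  have hker : LinearMap.ker Φ ≤ LinearMap.ker (row c) := by
    intro x hx
    have hx' : ∀ i, ∑ j, A i j * x j = 0 := by
      intro i
      have := congrFun (LinearMap.mem_ker.mp hx) i
      simpa [Φ, row] using this
    simpa [row] using hQ x hx'
  let q := (LinearMap.ker Φ).liftQ (row c) hker
  let e := Φ.quotKerEquivRange
  obtain ⟨ψ, hψ⟩ := (q.comp (e.symm : LinearMap.range Φ →ₗ[ℚ] _)).exists_extend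
  have hψΦ : ∀ x, ψ (Φ x) = ∑ j, c j * x j := by
    intro x
    have h1 : ((LinearMap.range Φ).subtype ⟨Φ x, LinearMap.mem_range_self Φ x⟩) = Φ x := rfl
    have h2 := congrFun (congrArg (fun (t : _ →ₗ[ℚ] ℚ) => t.toFun) hψ)
      ⟨Φ x, LinearMap.mem_range_self Φ x⟩
    have h4 : (e.symm ⟨Φ x, LinearMap.mem_range_self Φ x⟩) = Submodule.Quotient.mk x :=
      (LinearEquiv.symm_apply_eq e).mpr
        (Subtype.ext (LinearMap.quotKerEquivRange_apply_mk Φ x).symm)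
    calc ψ (Φ x) = (q.comp (e.symm : LinearMap.range Φ →ₗ[ℚ] _))
          ⟨Φ x, LinearMap.mem_range_self Φ x⟩ := by
            simpa using h2
      _ = q (Submodule.Quotient.mk x) := by simp [LinearMap.comp_apply, h4]
      _ = row c x := Submodule.liftQ_apply _ _ _
      _ = ∑ j, c j * x j := rfl
  refine ⟨fun i => ψ ((Pi.single i 1 : ι → ℚ)), fun j => ?_⟩
  have h5 : Φ ((Pi.single j 1 : Fin N → ℚ)) = fun i => A i j := by
    funext i
    simp [Φ, row, Pi.single_apply, mul_ite, Finset.sum_ite_eq']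
  have h6 := hψΦ ((Pi.single j 1 : Fin N → ℚ))
  rw [h5] at h6
  have h7 : ψ (fun i => A i j) = ∑ i, A i j * ψ ((Pi.single i 1 : ι → ℚ)) := by
    have : (fun i => A i j) = ∑ i, A i j • (Pi.single i (1:ℚ) : ι → ℚ) := by
      funext i'
      simp [Pi.single_apply, Finset.sum_ite_eq', mul_comm]
    rw [this, map_sum]
    simp [map_smul, smul_eq_mul]
  rw [h7] at h6
  have h8 : ∑ j', c j' * (Pi.single j (1:ℚ) : Fin N → ℚ) j' = c j := by
    simp [Pi.single_apply, mul_ite, Finset.sum_ite_eq']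
  rw [h8] at h6
  rw [← h6]
  exact Finset.sum_congr rfl fun i _ => mul_comm _ _


lemma evalForm_int {N : ℕ} (c : Fin N → ℤ) {x : V N} (hx : x ∈ latticePts N) :
    ∃ m : ℤ, evalForm c x = (m : ℝ) := by
  choose m hm using hx
  refine ⟨∑ i, c i * m i, ?_⟩
  rw [evalForm]
  push_cast
  exact Finset.sum_congr rfl fun i _ => by rw [hm i]

/-- cast of a rational vector -/
def qcast {N : ℕ} (x : Fin N → ℚ) : V N := fun i => ((x i : ℝ))

lemma evalForm_qcast {N : ℕ} (c : Fin N → ℤ) (x : Fin N → ℚ) :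
    evalForm c (qcast x) = ((∑ j, (c j : ℚ) * x j : ℚ) : ℝ) := by
  rw [evalForm]
  push_cast
  rfl

lemma qcast_scaled_mem {N : ℕ} (x : Fin N → ℚ) :
    qcast ((((∏ i, (x i).den : ℕ) : ℚ)) • x) ∈ latticePts N := by
  intro i
  set Dn : ℕ := ∏ i, (x i).den with hDn
  obtain ⟨k, hk⟩ : (x i).den ∣ Dn := Finset.dvd_prod_of_mem _ (Finset.mem_univ i)
  refine ⟨(k : ℤ) * (x i).num, ?_⟩
  have hden : ((x i).den : ℚ) * x i = (x i).num := by
    rw [mul_comm]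
    exact_mod_cast Rat.mul_den_eq_num (x i)
  have hq : (Dn : ℚ) * x i = (k : ℚ) * (x i).num := by
    rw [hk]
    push_cast
    rw [mul_comm ((x i).den : ℚ) (k : ℚ), mul_assoc, hden]
  show ((((Dn : ℚ) • x) i : ℚ) : ℝ) = _
  rw [Pi.smul_apply, smul_eq_mul, hq]
  push_cast
  ring

lemma exists_lattice_form_ne {N : ℕ} {ι : Type} [Fintype ι] (A : ι → Fin N → ℤ)
    (c : Fin N → ℤ) (x : V N) (hx : ∀ i, evalForm (A i) x = 0) (hcx : evalForm c x ≠ 0) :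
    ∃ u, u ∈ latticePts N ∧ (∀ i, evalForm (A i) u = 0) ∧ evalForm c u ≠ 0 := by
  by_contra hcon
  push_neg at hcon
  -- every rational solution kills c
  have hQ : ∀ xq : Fin N → ℚ, (∀ i, ∑ j, ((A i j : ℚ)) * xq j = 0) →
      ∑ j, ((c j : ℚ)) * xq j = 0 := by
    intro xq hxq
    set D : ℚ := (((∏ i, (xq i).den : ℕ) : ℚ)) with hD
    have hDpos : 0 < D := by
      rw [hD]
      exact_mod_cast Finset.prod_pos fun i _ => (xq i).den_pos
    set u : V N := qcast (D • xq) with hu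
    have humem : u ∈ latticePts N := qcast_scaled_mem xq
    have hrows : ∀ i, evalForm (A i) u = 0 := by
      intro i
      rw [hu, evalForm_qcast]
      have : ∑ j, (A i j : ℚ) * (D • xq) j = D * ∑ j, (A i j : ℚ) * xq j := by
        rw [Finset.mul_sum]
        exact Finset.sum_congr rfl fun j _ => by simp [Pi.smul_apply, smul_eq_mul]; ring
      rw [this, hxq i, mul_zero]
      norm_num
    have hcu := hcon u humem hrows
    rw [hu, evalForm_qcast] at hcu
    have : ∑ j, (c j : ℚ) * (D • xq) j = D * ∑ j, (c j : ℚ) * xq j := by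
      rw [Finset.mul_sum]
      exact Finset.sum_congr rfl fun j _ => by simp [Pi.smul_apply, smul_eq_mul]; ring
    rw [this] at hcu
    have h0 : D * ∑ j, (c j : ℚ) * xq j = 0 := by exact_mod_cast hcu
    rcases mul_eq_zero.mp h0 with h | h
    · exact absurd h (ne_of_gt hDpos)
    · exact h
  obtain ⟨lam, hlam⟩ := transfer_rat (fun i j => ((A i j : ℚ))) (fun j => ((c j : ℚ))) hQ
  apply hcx
  have : evalForm c x = ∑ i, (lam i : ℝ) * evalForm (A i) x := by
    rw [evalForm]
    have hc : ∀ j, (c j : ℝ) = ∑ i, (lam i : ℝ) * (A i j : ℝ) := by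
      intro j
      have := hlam j
      exact_mod_cast congrArg (fun q : ℚ => (q : ℝ)) this
    calc ∑ j, (c j : ℝ) * x j = ∑ j, (∑ i, (lam i : ℝ) * (A i j : ℝ)) * x j :=
          Finset.sum_congr rfl fun j _ => by rw [hc j]
      _ = ∑ j, ∑ i, (lam i : ℝ) * (A i j : ℝ) * x j := by
          exact Finset.sum_congr rfl fun j _ => Finset.sum_mul _ _ _
      _ = ∑ i, ∑ j, (lam i : ℝ) * (A i j : ℝ) * x j := Finset.sum_comm
      _ = ∑ i, (lam i : ℝ) * evalForm (A i) x := by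
          refine Finset.sum_congr rfl fun i _ => ?_
          rw [evalForm, Finset.mul_sum]
          exact Finset.sum_congr rfl fun j _ => by ring
  rw [this]
  exact Finset.sum_eq_zero fun i _ => by rw [hx i, mul_zero]


lemma evalForm_add_smul {N : ℕ} (c : Fin N → ℤ) (a b : V N) (t : ℝ) :
    evalForm c (a + t • b) = evalForm c a + t * evalForm c b := by
  have h1 := (evalFormL c).map_add a (t • b)
  have h2 := (evalFormL c).map_smul t b
  simp only [evalFormL_apply, smul_eq_mul] at h1 h2
  rw [h1, h2]

lemma mem_coneSpan_of_constraints {N n m : ℕ} (f : Fin n → Fin N → ℤ) (g : Fin m → Fin N → ℤ)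
    (σ : Set (V N)) (hσ : σ = {x | (∀ i, evalForm (f i) x = 0) ∧ ∀ j, 0 ≤ evalForm (g j) x})
    (w : V N) (hw1 : ∀ i, evalForm (f i) w = 0)
    (hw2 : ∀ j, (∃ y ∈ σ, 0 < evalForm (g j) y) ∨ evalForm (g j) w = 0) :
    w ∈ coneSpan σ := by
  classical
  have h0σ : (0 : V N) ∈ σ := by
    rw [hσ]
    exact ⟨fun i => map_zero (evalFormL (f i)),
      fun j => le_of_eq (map_zero (evalFormL (g j))).symm⟩
  have haddσ : ∀ a b : V N, a ∈ σ → b ∈ σ → a + b ∈ σ := by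
    intro a b ha hb
    rw [hσ] at ha hb ⊢
    refine ⟨fun i => ?_, fun j => ?_⟩
    · have h1 := (evalFormL (f i)).map_add a b
      simp only [evalFormL_apply] at h1
      rw [h1, ha.1 i, hb.1 i, add_zero]
    · have h1 := (evalFormL (g j)).map_add a b
      simp only [evalFormL_apply] at h1
      rw [h1]
      exact add_nonneg (ha.2 j) (hb.2 j)
  let y : Fin m → V N := fun j => if h : ∃ z ∈ σ, 0 < evalForm (g j) z then h.choose else 0
  have hyσ : ∀ j, y j ∈ σ := by
    intro j
    by_cases h : ∃ z ∈ σ, 0 < evalForm (g j) z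
    · simp only [y, dif_pos h]
      exact h.choose_spec.1
    · simp only [y, dif_neg h]
      exact h0σ
  set x₀ : V N := ∑ j, y j with hx₀
  have hx₀σ : x₀ ∈ σ := by
    rw [hx₀]
    exact Finset.sum_induction y (· ∈ σ) haddσ h0σ (fun j _ => hyσ j)
  have hx₀c : (∀ i, evalForm (f i) x₀ = 0) ∧ ∀ j, 0 ≤ evalForm (g j) x₀ := by
    rw [hσ] at hx₀σ
    exact hx₀σ
  have hσc : ∀ z ∈ σ, (∀ i, evalForm (f i) z = 0) ∧ ∀ j, 0 ≤ evalForm (g j) z := by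
    intro z hz
    rw [hσ] at hz
    exact hz
  have hx₀pos : ∀ j, (∃ z ∈ σ, 0 < evalForm (g j) z) → 0 < evalForm (g j) x₀ := by
    intro j h
    have hsum : evalForm (g j) x₀ = ∑ j', evalForm (g j) (y j') := by
      rw [hx₀]
      have := map_sum (evalFormL (g j)) y Finset.univ
      simpa only [evalFormL_apply] using this
    rw [hsum]
    refine Finset.sum_pos' (fun j' _ => (hσc _ (hyσ j')).2 j) ⟨j, Finset.mem_univ j, ?_⟩
    have : y j = h.choose := by simp only [y, dif_pos h]
    rw [this]
    exact h.choose_spec.2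
  let hval : Fin m → ℝ := fun j =>
    if evalForm (g j) w < 0 then evalForm (g j) x₀ / (-(evalForm (g j) w)) else 1
  let s : Finset ℝ := insert 1 (Finset.image hval Finset.univ)
  have hs : s.Nonempty := ⟨1, Finset.mem_insert_self _ _⟩
  set ε := s.min' hs with hε
  have hspos : ∀ r ∈ s, 0 < r := by
    intro r hr
    rcases Finset.mem_insert.mp hr with h | h
    · rw [h]; norm_num
    · obtain ⟨j, _, rfl⟩ := Finset.mem_image.mp h
      by_cases hj : evalForm (g j) w < 0
      · have hpos : 0 < evalForm (g j) x₀ := by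
          rcases hw2 j with h' | h'
          · exact hx₀pos j h'
          · rw [h'] at hj; norm_num at hj
        simp only [hval, if_pos hj]
        exact div_pos hpos (by linarith)
      · simp only [hval, if_neg hj]; norm_num
  have hεpos : 0 < ε := hspos _ (s.min'_mem hs)
  have hεle : ∀ j, ε ≤ hval j := fun j =>
    Finset.min'_le _ _ (Finset.mem_insert_of_mem (Finset.mem_image_of_mem hval (Finset.mem_univ j)))
  have hx₁σ : x₀ + ε • w ∈ σ := by
    rw [hσ]
    refine ⟨fun i => ?_, fun j => ?_⟩
    · rw [evalForm_add_smul, hw1 i, hx₀c.1 i]; ring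
    · rw [evalForm_add_smul]
      by_cases hj : evalForm (g j) w < 0
      · have h1 : ε ≤ evalForm (g j) x₀ / (-(evalForm (g j) w)) := by
          have := hεle j
          simpa only [hval, if_pos hj] using this
        rw [le_div_iff₀ (by linarith : (0:ℝ) < -(evalForm (g j) w))] at h1
        nlinarith
      · push_neg at hj
        exact add_nonneg (hx₀c.2 j) (mul_nonneg hεpos.le hj)
  have hw' : w = ε⁻¹ • ((x₀ + ε • w) - x₀) := by
    rw [add_sub_cancel_left, smul_smul, inv_mul_cancel₀ (ne_of_gt hεpos), one_smul]
  rw [hw']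
  exact Submodule.smul_mem _ _
    (Submodule.sub_mem _ (Submodule.subset_span hx₁σ) (Submodule.subset_span hx₀σ))


lemma mem_coneLattice {N : ℕ} (ρ : Set (V N)) (z : V N) :
    z ∈ coneLattice ρ ↔ z ∈ coneSpan ρ ∧ z ∈ latticePts N := by
  rw [coneLattice, AddSubgroup.mem_inf, Submodule.mem_toAddSubgroup]


/-- Let `τ < σ` be cones in `V = Λ ⊗ ℝ` with `dim τ = dim σ − 1`
(`τ` a proper face of `σ`). Then the quotient lattice `Λ_σ/Λ_τ` is isomorphic to
`ℤ` (there is `u ∈ Λ_σ` such that every `x ∈ Λ_σ` is uniquely `k • u` modulo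
`Λ_τ`), the image of `σ` in the one-dimensional space `V_σ/V_τ` is contained in a
unique closed half-line, and there is a unique generator `u_{σ/τ}` of `Λ_σ/Λ_τ`
lying in this half-line (the primitive normal vector of `σ` relative to `τ`). -/
theorem stmt_0 (N : ℕ) (τ σ : Set (V N)) (hface : IsFace τ σ) (hne : τ ≠ σ)
    (hdim : coneDim τ + 1 = coneDim σ) :
    ∃ u : V N, IsNormalVector τ σ u ∧
      -- `u` generates `Λ_σ/Λ_τ ≅ ℤ` freely:
      (∀ x ∈ coneLattice σ, ∃! k : ℤ, x - k • u ∈ coneLattice τ) ∧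
      -- uniqueness of the primitive normal vector (modulo `Λ_τ`):
      (∀ u' : V N, IsNormalVector τ σ u' → u' - u ∈ coneLattice τ) ∧
      -- the half-line of `V_σ/V_τ` containing the image of `σ` is unique: any two
      -- linear forms vanishing on `V_τ`, nonnegative and not identically zero on
      -- `σ`, cut out the same half-space of `V_σ`:
      (∀ g g' : (V N) →ₗ[ℝ] ℝ,
        ((∀ x ∈ coneSpan τ, g x = 0) ∧ (∀ x ∈ σ, 0 ≤ g x) ∧ ∃ x ∈ σ, 0 < g x) →
        ((∀ x ∈ coneSpan τ, g' x = 0) ∧ (∀ x ∈ σ, 0 ≤ g' x) ∧ ∃ x ∈ σ, 0 < g' x) →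
        ∀ x ∈ coneSpan σ, (0 ≤ g x ↔ 0 ≤ g' x)) := by
  classical
  obtain ⟨hτcone, hσcone, hτσ, c, hcpos, hτeq⟩ := hface
  obtain ⟨n, m, f, g, hσ⟩ := hσcone
  have hσeq : ∀ z ∈ σ, ∀ i, evalForm (f i) z = 0 := by
    intro z hz
    rw [hσ] at hz
    exact hz.1
  have hσineq : ∀ z ∈ σ, ∀ j, 0 ≤ evalForm (g j) z := by
    intro z hz
    rw [hσ] at hz
    exact hz.2
  -- c vanishes on the span of τ
  have hτker : coneSpan τ ≤ LinearMap.ker (evalFormL c) := by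
    rw [coneSpan, Submodule.span_le]
    intro x hx
    rw [SetLike.mem_coe, LinearMap.mem_ker, evalFormL_apply]
    rw [hτeq] at hx
    exact hx.2
  have hGτ : ∀ x ∈ coneSpan τ, evalForm c x = 0 := fun x hx => hτker hx
  have hτσspan : coneSpan τ ≤ coneSpan σ := Submodule.span_mono hτσ
  -- a point of σ where c is positive
  have hxpos : ∃ x ∈ σ, 0 < evalForm c x := by
    by_contra h
    push_neg at h
    apply hne
    rw [hτeq]
    ext z
    constructor
    · intro hz
      exact hz.1
    · intro hz
      exact ⟨hz, le_antisymm (h z hz) (hcpos z hz)⟩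
  obtain ⟨xp, hxpσ, hxpc⟩ := hxpos
  -- the combined linear system cutting out the span of σ
  set A : (Fin n ⊕ Fin m) → Fin N → ℤ :=
    Sum.elim (fun i => f i)
      (fun j => if ∀ y ∈ σ, evalForm (g j) y = 0 then g j else 0) with hA
  have hArows : ∀ z ∈ σ, ∀ ij, evalForm (A ij) z = 0 := by
    intro z hz ij
    rcases ij with i | j
    · exact hσeq z hz i
    · by_cases hj : ∀ y ∈ σ, evalForm (g j) y = 0
      · rw [show A (Sum.inr j) = g j by simp [hA, if_pos hj]]
        exact hj z hz
      · rw [show A (Sum.inr j) = 0 by simp [hA, if_neg hj]]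
        simp [evalForm]
  have hWspan : ∀ z : V N, (∀ ij, evalForm (A ij) z = 0) → z ∈ coneSpan σ := by
    intro z hz
    refine mem_coneSpan_of_constraints f g σ hσ z (fun i => hz (Sum.inl i)) (fun j => ?_)
    by_cases hj : ∀ y ∈ σ, evalForm (g j) y = 0
    · right
      have := hz (Sum.inr j)
      rwa [show A (Sum.inr j) = g j by simp [hA, if_pos hj]] at this
    · left
      push_neg at hj
      obtain ⟨y, hyσ, hy⟩ := hj
      exact ⟨y, hyσ, lt_of_le_of_ne (hσineq y hyσ j) (Ne.symm hy)⟩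
  -- a lattice point in the span of σ with nonzero c-value
  obtain ⟨u₀, hu₀lat, hu₀rows, hu₀c⟩ :=
    exists_lattice_form_ne A c xp (hArows xp hxpσ) (ne_of_gt hxpc)
  have hu₀span : u₀ ∈ coneSpan σ := hWspan u₀ hu₀rows
  -- orient it
  set u₁ : V N := if 0 < evalForm c u₀ then u₀ else -u₀ with hu₁
  have hu₁Λ : u₁ ∈ coneLattice σ := by
    rw [mem_coneLattice]
    by_cases h : 0 < evalForm c u₀
    · rw [hu₁, if_pos h]
      exact ⟨hu₀span, hu₀lat⟩
    · rw [hu₁, if_neg h]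
      exact ⟨Submodule.neg_mem _ hu₀span, AddSubgroup.neg_mem _ hu₀lat⟩
  have hu₁pos : 0 < evalForm c u₁ := by
    by_cases h : 0 < evalForm c u₀
    · rw [hu₁, if_pos h]
      exact h
    · rw [hu₁, if_neg h]
      have hneg := (evalFormL c).map_neg u₀
      simp only [evalFormL_apply] at hneg
      rw [hneg]
      rcases lt_or_eq_of_le (not_lt.mp h) with h' | h'
      · linarith
      · exact absurd h' hu₀c
  -- the minimal positive integer value of c on the lattice of σ
  have hP : ∃ k : ℕ, 0 < k ∧ ∃ x, x ∈ coneLattice σ ∧ evalForm c x = (k : ℝ) := by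
    obtain ⟨m₁, hm₁⟩ := evalForm_int c ((mem_coneLattice σ u₁).mp hu₁Λ).2
    have hm₁pos : 0 < m₁ := by
      have : (0:ℝ) < (m₁ : ℝ) := hm₁ ▸ hu₁pos
      exact_mod_cast this
    refine ⟨m₁.toNat, by omega, u₁, hu₁Λ, ?_⟩
    rw [hm₁]
    congr 1
    omega
  obtain ⟨d, ⟨hdpos, u, huΛ, huval⟩, hdmin⟩ :
      ∃ d : ℕ, (0 < d ∧ ∃ x, x ∈ coneLattice σ ∧ evalForm c x = (d : ℝ)) ∧
        ∀ k < d, ¬(0 < k ∧ ∃ x, x ∈ coneLattice σ ∧ evalForm c x = (k : ℝ)) :=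
    ⟨Nat.find hP, Nat.find_spec hP, fun k hk => Nat.find_min hP hk⟩
  have hdR : (0:ℝ) < (d:ℝ) := by exact_mod_cast hdpos
  have huspan : u ∈ coneSpan σ := ((mem_coneLattice σ u).mp huΛ).1
  have hulat : u ∈ latticePts N := ((mem_coneLattice σ u).mp huΛ).2
  have hune : u ≠ 0 := by
    intro h
    rw [h] at huval
    have h0 := map_zero (evalFormL c)
    simp only [evalFormL_apply] at h0
    rw [h0] at huval
    exact absurd huval.symm (ne_of_gt hdR)
  -- span σ = span τ ⊕ ℝ u
  have hsup : coneSpan τ ⊔ (ℝ ∙ u) = coneSpan σ := by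
    have hle : coneSpan τ ⊔ (ℝ ∙ u) ≤ coneSpan σ :=
      sup_le hτσspan ((Submodule.span_singleton_le_iff_mem u _).mpr huspan)
    refine Submodule.eq_of_le_of_finrank_eq hle ?_
    have hinf : coneSpan τ ⊓ (ℝ ∙ u) = ⊥ := by
      rw [eq_bot_iff]
      rintro z ⟨hz1, hz2⟩
      obtain ⟨t, rfl⟩ := Submodule.mem_span_singleton.mp hz2
      have h1 := hGτ _ hz1
      have ht : evalForm c (t • u) = t * (d:ℝ) := by
        have h2 := (evalFormL c).map_smul t u
        simp only [evalFormL_apply, smul_eq_mul] at h2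
        rw [h2, huval]
      rw [ht] at h1
      have : t = 0 := by
        rcases mul_eq_zero.mp h1 with h' | h'
        · exact h'
        · exact absurd h' (ne_of_gt hdR)
      rw [this, zero_smul]
      exact Submodule.zero_mem ⊥
    have h1 : Module.finrank ℝ ↥(ℝ ∙ u) = 1 := finrank_span_singleton hune
    have h2 := Submodule.finrank_sup_add_finrank_inf_eq (coneSpan τ) (ℝ ∙ u)
    rw [hinf, h1, finrank_bot] at h2
    unfold coneDim at hdim
    omega
  -- decomposition along u
  have hdecomp : ∀ z ∈ coneSpan σ, ∃ w ∈ coneSpan τ, ∃ t : ℝ,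
      z = w + t • u ∧ evalForm c z = t * (d:ℝ) := by
    intro z hz
    rw [← hsup] at hz
    obtain ⟨w, hw, zu, hzu, rfl⟩ := Submodule.mem_sup.mp hz
    obtain ⟨t, rfl⟩ := Submodule.mem_span_singleton.mp hzu
    refine ⟨w, hw, t, rfl, ?_⟩
    rw [evalForm_add_smul, hGτ w hw, huval, zero_add]
  have hker : ∀ z ∈ coneSpan σ, evalForm c z = 0 → z ∈ coneSpan τ := by
    intro z hz h0
    obtain ⟨w, hw, t, hzeq, hval⟩ := hdecomp z hz
    have ht : t = 0 := by
      rw [h0] at hval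
      rcases mul_eq_zero.mp hval.symm with h' | h'
      · exact h'
      · exact absurd h' (ne_of_gt hdR)
    rw [hzeq, ht, zero_smul, add_zero]
    exact hw
  have hzsmulval : ∀ (k : ℤ) (z : V N), evalForm c (k • z) = (k:ℝ) * evalForm c z := by
    intro k z
    have h2 := map_zsmul (evalFormL c) k z
    simp only [evalFormL_apply] at h2
    rw [h2, zsmul_eq_mul]
  -- division with remainder in the lattice
  have hdiv : ∀ x ∈ coneLattice σ, ∃ k : ℤ, x - k • u ∈ coneLattice τ := by
    intro x hx
    obtain ⟨mx, hmx⟩ := evalForm_int c ((mem_coneLattice σ x).mp hx).2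
    set q := mx / (d:ℤ) with hq
    set r := mx % (d:ℤ) with hr
    have hdz : (d:ℤ) ≠ 0 := by exact_mod_cast ne_of_gt hdpos
    have hr0 : 0 ≤ r := Int.emod_nonneg mx hdz
    have hrd : r < (d:ℤ) := Int.emod_lt_of_pos mx (by exact_mod_cast hdpos)
    have hzΛ : x - q • u ∈ coneLattice σ := AddSubgroup.sub_mem _ hx (AddSubgroup.zsmul_mem _ huΛ q)
    have hzval : evalForm c (x - q • u) = (r : ℝ) := by
      have hsub := (evalFormL c).map_sub x (q • u)
      simp only [evalFormL_apply] at hsub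
      rw [hsub, hzsmulval, huval, hmx]
      have : mx = (d:ℤ) * q + r := (Int.mul_ediv_add_emod mx (d:ℤ)).symm
      push_cast [this]
      ring
    have hrz : r = 0 := by
      by_contra hrne
      have hrpos : 0 < r := lt_of_le_of_ne hr0 (Ne.symm hrne)
      have hlt : r.toNat < d := by omega
      refine hdmin _ hlt ⟨by omega, x - q • u, hzΛ, ?_⟩
      rw [hzval]
      congr 1
      omega
    refine ⟨q, ?_⟩
    rw [mem_coneLattice]
    refine ⟨hker _ ((mem_coneLattice σ _).mp hzΛ).1 (by rw [hzval, hrz]; norm_num),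
      ((mem_coneLattice σ _).mp hzΛ).2⟩
  -- uniqueness of the coefficient
  have huniq : ∀ x ∈ coneLattice σ, ∃! k : ℤ, x - k • u ∈ coneLattice τ := by
    intro x hx
    obtain ⟨k, hk⟩ := hdiv x hx
    refine ⟨k, hk, fun k' hk' => ?_⟩
    have hsub : (k - k') • u ∈ coneLattice τ := by
      have := AddSubgroup.sub_mem _ hk' hk
      have heq : (x - k' • u) - (x - k • u) = (k - k') • u := by
        rw [sub_zsmul]
        abel
      rwa [heq] at this
    have h0 : evalForm c ((k - k') • u) = 0 :=
      hGτ _ ((mem_coneLattice τ _).mp hsub).1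
    rw [hzsmulval, huval] at h0
    have : ((k - k' : ℤ) : ℝ) = 0 := by
      rcases mul_eq_zero.mp h0 with h' | h'
      · exact h'
      · exact absurd h' (ne_of_gt hdR)
    have : k - k' = 0 := by exact_mod_cast this
    omega
  -- positivity of any supporting form at u
  have hhalf : ∀ (gl : V N →ₗ[ℝ] ℝ), (∀ x ∈ coneSpan τ, gl x = 0) →
      (∀ x ∈ σ, 0 ≤ gl x) → (∃ x ∈ σ, 0 < gl x) → 0 < gl u := by
    rintro gl h0 hnn ⟨x, hxσ, hx⟩
    obtain ⟨w, hw, t, hxeq, hval⟩ := hdecomp x (Submodule.subset_span hxσ)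
    have h1 : gl x = t * gl u := by
      rw [hxeq, map_add, map_smul, h0 w hw, zero_add, smul_eq_mul]
    have ht0 : 0 ≤ t := by
      have := hcpos x hxσ
      rw [hval] at this
      nlinarith
    nlinarith [hx, h1]
  refine ⟨u, ⟨huΛ, fun x hx => (huniq x hx).exists.imp (fun k hk => hk), evalFormL c,
      (fun x hx => hGτ x hx), hcpos, by rw [evalFormL_apply, huval]; exact hdR⟩,
    huniq, ?_, ?_⟩
  · -- uniqueness of primitive normal vector
    rintro u' ⟨hu'Λ, hu'gen, g', hg'τ, hg'σ, hg'u'⟩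
    have hu'span : u' ∈ coneSpan σ := ((mem_coneLattice σ u').mp hu'Λ).1
    have hu'lat : u' ∈ latticePts N := ((mem_coneLattice σ u').mp hu'Λ).2
    obtain ⟨w', hw', t, hu'eq, hu'val⟩ := hdecomp u' hu'span
    obtain ⟨wp, hwp, s, hxpeq, hxpval⟩ := hdecomp xp (Submodule.subset_span hxpσ)
    have hs : 0 < s := by
      rw [hxpval] at hxpc
      nlinarith
    have hgpu : 0 ≤ g' u := by
      have h1 : g' xp = s * g' u := by
        rw [hxpeq, map_add, map_smul, hg'τ wp hwp, zero_add, smul_eq_mul]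
      have h2 : 0 ≤ g' xp := hg'σ xp hxpσ
      nlinarith
    have h3 : g' u' = t * g' u := by
      rw [hu'eq, map_add, map_smul, hg'τ w' hw', zero_add, smul_eq_mul]
    have ht : 0 < t := by nlinarith
    obtain ⟨m', hm'⟩ := evalForm_int c hu'lat
    have hm'pos : 0 < m' := by
      have : (0:ℝ) < (m' : ℝ) := by
        rw [← hm', hu'val]
        positivity
      exact_mod_cast this
    have hdle : (d:ℤ) ≤ m' := by
      by_contra hlt
      push_neg at hlt
      have h4 : m'.toNat < d := by omega
      refine hdmin _ h4 ⟨by omega, u', hu'Λ, ?_⟩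
      rw [hm']
      congr 1
      omega
    obtain ⟨k, hk⟩ := hu'gen u huΛ
    have h5 : evalForm c (u - k • u') = 0 := hGτ _ ((mem_coneLattice τ _).mp hk).1
    have h6 : evalForm c (u - k • u') = (d:ℝ) - (k:ℝ) * (m':ℝ) := by
      have hsub := (evalFormL c).map_sub u (k • u')
      simp only [evalFormL_apply] at hsub
      rw [hsub, hzsmulval, huval, hm']
    rw [h6] at h5
    have h7 : (d:ℤ) = k * m' := by
      have : (d:ℝ) = (k:ℝ) * (m':ℝ) := by linarith
      exact_mod_cast this
    have hk1 : 1 ≤ k := by nlinarith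
    have hmd : m' = (d:ℤ) := by nlinarith
    have h8 : evalForm c (u' - u) = 0 := by
      have hsub := (evalFormL c).map_sub u' u
      simp only [evalFormL_apply] at hsub
      rw [hsub, huval, hm', hmd]
      push_cast
      ring
    rw [mem_coneLattice]
    exact ⟨hker _ (Submodule.sub_mem _ hu'span huspan) h8,
      AddSubgroup.sub_mem _ hu'lat hulat⟩
  · -- uniqueness of the half-line
    rintro gl gl' ⟨h1, h2, h3⟩ ⟨h1', h2', h3'⟩ x hx
    have hgu : 0 < gl u := hhalf gl h1 h2 h3
    have hgu' : 0 < gl' u := hhalf gl' h1' h2' h3'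
    obtain ⟨w, hw, t, hxeq, hval⟩ := hdecomp x hx
    have e1 : gl x = t * gl u := by
      rw [hxeq, map_add, map_smul, h1 w hw, zero_add, smul_eq_mul]
    have e2 : gl' x = t * gl' u := by
      rw [hxeq, map_add, map_smul, h1' w hw, zero_add, smul_eq_mul]
    rw [e1, e2]
    constructor
    · intro h
      have ht : 0 ≤ t := by
        by_contra hlt
        push_neg at hlt
        exact absurd h (not_le.mpr (mul_neg_of_neg_of_pos hlt hgu))
      exact mul_nonneg ht hgu'.le
    · intro h
      have ht : 0 ≤ t := by
        by_contra hlt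
        push_neg at hlt
        exact absurd h (not_le.mpr (mul_neg_of_neg_of_pos hlt hgu'))
      exact mul_nonneg ht hgu.le


end TropFan
end

section
/- Let (Y, ω_Y) be a refinement of a weighted fan (X, ω_X) of dimension n in V. Then (Y, ω_Y) is a tropical fan if and only if (X, ω_X) is a tropical fan. Consequently, the property of being tropical is well-defined on equivalence classes of weighted fans. -/
open scoped BigOperators

namespace TropFan

section Aux

open Module

variable {N : ℕ}

/-- `evalForm` as a linear map. -/
def evalFormLM (c : Fin N → ℤ) : (V N) →ₗ[ℝ] ℝ where
  toFun := evalForm c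
  map_add' x y := by
    unfold evalForm
    rw [← Finset.sum_add_distrib]
    exact Finset.sum_congr rfl fun i _ => by simp [mul_add]
  map_smul' r x := by
    unfold evalForm
    simp only [RingHom.id_apply, smul_eq_mul, Finset.mul_sum]
    exact Finset.sum_congr rfl fun i _ => by
      simp only [Pi.smul_apply, smul_eq_mul]; ring

@[simp] lemma evalFormLM_apply (c : Fin N → ℤ) (x : V N) : evalFormLM c x = evalForm c x := rfl

lemma vanish_span {S : Set (V N)} {φ : (V N) →ₗ[ℝ] ℝ} (h : ∀ x ∈ S, φ x = 0) :
    ∀ x ∈ Submodule.span ℝ S, φ x = 0 := by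
  intro x hx
  have : Submodule.span ℝ S ≤ LinearMap.ker φ := Submodule.span_le.mpr fun y hy => h y hy
  exact this hx

lemma IsCone.zero_mem {σ : Set (V N)} (h : IsCone σ) : (0 : V N) ∈ σ := by
  obtain ⟨a, b, f, g, rfl⟩ := h
  constructor
  · intro i; exact map_zero (evalFormLM (f i))
  · intro j; rw [show evalForm (g j) 0 = 0 from map_zero (evalFormLM (g j))]

lemma IsCone.combo_mem {σ : Set (V N)} (h : IsCone σ) {x y : V N} {a b : ℝ}
    (hx : x ∈ σ) (hy : y ∈ σ) (ha : 0 ≤ a) (hb : 0 ≤ b) : a • x + b • y ∈ σ := by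
  obtain ⟨n₁, m₁, f, g, rfl⟩ := h
  obtain ⟨hx1, hx2⟩ := hx
  obtain ⟨hy1, hy2⟩ := hy
  constructor
  · intro i
    have he : evalForm (f i) (a • x + b • y) = a * evalForm (f i) x + b * evalForm (f i) y := by
      have := (evalFormLM (f i)).map_add (a • x) (b • y)
      simpa [map_smul, smul_eq_mul] using this
    rw [he, hx1 i, hy1 i]; ring
  · intro j
    have he : evalForm (g j) (a • x + b • y) = a * evalForm (g j) x + b * evalForm (g j) y := by
      have := (evalFormLM (g j)).map_add (a • x) (b • y)
      simpa [map_smul, smul_eq_mul] using this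
    rw [he]
    have := hx2 j; have := hy2 j
    positivity

lemma IsCone.add_mem {σ : Set (V N)} (h : IsCone σ) {x y : V N}
    (hx : x ∈ σ) (hy : y ∈ σ) : x + y ∈ σ := by
  simpa using h.combo_mem hx hy zero_le_one zero_le_one

lemma IsCone.smul_mem {σ : Set (V N)} (h : IsCone σ) {x : V N} {a : ℝ}
    (hx : x ∈ σ) (ha : 0 ≤ a) : a • x ∈ σ := by
  simpa using h.combo_mem hx h.zero_mem ha le_rfl

lemma IsCone.sum_smul_mem {σ : Set (V N)} (h : IsCone σ) {ι : Type*} {s : Finset ι}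
    {c : ι → ℝ} {v : ι → V N} (hc : ∀ i ∈ s, 0 ≤ c i) (hv : ∀ i ∈ s, v i ∈ σ) :
    (∑ i ∈ s, c i • v i) ∈ σ := by
  classical
  induction s using Finset.induction_on with
  | empty => simpa using h.zero_mem
  | insert i s hnot ih =>
      rw [Finset.sum_insert hnot]
      exact h.add_mem (h.smul_mem (hv i (s.mem_insert_self i)) (hc i (s.mem_insert_self i)))
        (ih (fun j hj => hc j (Finset.mem_insert_of_mem hj))
            (fun j hj => hv j (Finset.mem_insert_of_mem hj)))

end Aux
section Aux2

open Module

variable {N : ℕ}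

lemma IsFace.subset' {τ σ : Set (V N)} (h : IsFace τ σ) : τ ⊆ σ := h.2.2.1

lemma coneSpan_mono {A B : Set (V N)} (h : A ⊆ B) : coneSpan A ≤ coneSpan B :=
  Submodule.span_mono h

lemma coneDim_mono {A B : Set (V N)} (h : A ⊆ B) : coneDim A ≤ coneDim B :=
  Submodule.finrank_mono (coneSpan_mono h)

lemma mem_coneSpan_self {A : Set (V N)} {x : V N} (hx : x ∈ A) : x ∈ coneSpan A :=
  Submodule.subset_span hx

/-- Within a fan, containment implies the face relation. -/
lemma Fan.isFace_of_subset (F : Fan N) {τ σ : Set (V N)} (hτ : τ ∈ F.cones)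
    (hσ : σ ∈ F.cones) (h : τ ⊆ σ) : IsFace τ σ := by
  have := F.inter_face σ hσ τ hτ
  rwa [Set.inter_eq_right.mpr h] at this

/-- A face spanning the same space as the cone is the whole cone. -/
lemma IsFace.eq_of_span {τ σ : Set (V N)} (h : IsFace τ σ)
    (hs : coneSpan σ ≤ coneSpan τ) : τ = σ := by
  obtain ⟨-, -, hsub, c, -, hc⟩ := h
  apply Set.Subset.antisymm hsub
  intro x hx
  have hker : ∀ y ∈ coneSpan τ, evalFormLM c y = 0 := by
    apply vanish_span
    intro y hy
    rw [hc] at hy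
    exact hy.2
  rw [hc]
  exact ⟨hx, hker x (hs (mem_coneSpan_self hx))⟩

/-- Nested cones of a fan with the same dimension are equal. -/
lemma Fan.eq_of_subset_of_dim_le (F : Fan N) {A B : Set (V N)} (hA : A ∈ F.cones)
    (hB : B ∈ F.cones) (hsub : A ⊆ B) (hd : coneDim B ≤ coneDim A) : A = B := by
  refine (F.isFace_of_subset hA hB hsub).eq_of_span ?_
  have hle : coneSpan A ≤ coneSpan B := coneSpan_mono hsub
  exact le_of_eq (Submodule.eq_of_le_of_finrank_le hle hd).symm

lemma Fan.coneDim_le_of_pure {F : Fan N} {n : ℕ} (hp : F.IsPure n) {σ : Set (V N)}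
    (hσ : σ ∈ F.cones) : coneDim σ ≤ n := by
  obtain ⟨σ', ⟨-, hd⟩, hsub⟩ := hp σ hσ
  exact hd ▸ coneDim_mono hsub

/-- New face cut out by a nonnegative integral form. -/
lemma isFace_inter_ker {σ : Set (V N)} (h : IsCone σ) (c : Fin N → ℤ)
    (hc : ∀ x ∈ σ, 0 ≤ evalForm c x) :
    IsFace {x ∈ σ | evalForm c x = 0} σ := by
  obtain ⟨n₁, m₁, f, g, rfl⟩ := h
  refine ⟨?_, ⟨n₁, m₁, f, g, rfl⟩, fun x hx => hx.1, c, hc, rfl⟩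
  refine ⟨n₁ + 1, m₁, Fin.cons c f, g, ?_⟩
  ext x
  simp only [Set.mem_setOf_eq, Set.mem_sep_iff, Fin.forall_fin_succ, Fin.cons_zero,
    Fin.cons_succ]
  tauto

/-- Separating functional off a subspace. -/
lemma exists_functional {W : Submodule ℝ (V N)} {x : V N} (hx : x ∉ W) :
    ∃ φ : (V N) →ₗ[ℝ] ℝ, (∀ w ∈ W, φ w = 0) ∧ φ x ≠ 0 := by
  have hπ : W.mkQ x ≠ 0 := by
    simpa [Submodule.Quotient.mk_eq_zero] using hx
  have := (Module.forall_dual_apply_eq_zero_iff ℝ (W.mkQ x)).not.mpr hπ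
  push_neg at this
  obtain ⟨ψ, hψ⟩ := this
  exact ⟨ψ.comp W.mkQ, fun w hw => by
    simp [LinearMap.comp_apply, (Submodule.Quotient.mk_eq_zero W).mpr hw], hψ⟩

/-- A finite subset of `τ` spanning `coneSpan τ`. -/
lemma exists_finset_span (τ : Set (V N)) :
    ∃ D : Finset (V N), ↑D ⊆ τ ∧ Submodule.span ℝ (D : Set (V N)) = coneSpan τ := by
  classical
  let P : Set (Submodule ℝ (V N)) := {W | ∃ D : Finset (V N), ↑D ⊆ τ ∧ Submodule.span ℝ ↑D = W}
  have hP : P.Nonempty := ⟨⊥, ∅, by simp⟩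
  obtain ⟨W, hWP, hmax⟩ := set_has_maximal_iff_noetherian.mpr inferInstance P hP
  obtain ⟨D, hD, hDW⟩ := hWP
  have hτW : τ ⊆ (W : Set (V N)) := by
    intro x hx
    by_contra hxW
    have hmem : Submodule.span ℝ (↑(insert x D) : Set (V N)) ∈ P :=
      ⟨insert x D, by simpa using Set.insert_subset hx hD, rfl⟩
    have hle : W ≤ Submodule.span ℝ (↑(insert x D) : Set (V N)) := by
      rw [← hDW]
      exact Submodule.span_mono (by simp)
    have hlt : W < Submodule.span ℝ (↑(insert x D) : Set (V N)) := by
      refine lt_of_le_of_ne hle (fun heq => hxW ?_)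
      rw [heq]
      exact Submodule.subset_span (by simp)
    exact hmax _ hmem hlt
  refine ⟨D, hD, le_antisymm (Submodule.span_mono hD) ?_⟩
  rw [hDW]
  exact Submodule.span_le.mpr hτW

/-- Existence of a "generic point" of a cone. -/
lemma exists_generic {τ : Set (V N)} (hτ : IsCone τ) :
    ∃ p ∈ τ, ∀ (φ : (V N) →ₗ[ℝ] ℝ), (∀ x ∈ τ, 0 ≤ φ x) → φ p = 0 →
      ∀ x ∈ coneSpan τ, φ x = 0 := by
  classical
  obtain ⟨D, hD, hDspan⟩ := exists_finset_span τ
  refine ⟨∑ d ∈ D, d, ?_, ?_⟩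
  · have := hτ.sum_smul_mem (s := D) (c := fun _ => (1:ℝ)) (v := id)
      (fun i _ => zero_le_one) (fun i hi => hD hi)
    simpa using this
  · intro φ hφ hp
    have hsum : ∑ d ∈ D, φ d = 0 := by
      rw [← map_sum φ _ D]; exact hp
    have hzero : ∀ d ∈ D, φ d = 0 :=
      (Finset.sum_eq_zero_iff_of_nonneg (fun d hd => hφ d (hD hd))).mp hsum
    intro x hx
    rw [← hDspan] at hx
    exact vanish_span (fun y hy => hzero y hy) x hx

end Aux2
section Aux3

open Module

variable {N : ℕ}

lemma exists_minCone (F : Fan N) {A : Set (V N)} (h : ∃ D ∈ F.cones, A ⊆ D) :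
    ∃ C, IsMinConeOver F A C := by
  classical
  let S : Set (Set (V N)) := {D | D ∈ F.cones ∧ A ⊆ D}
  have hSfin : S.Finite := F.finite.subset (fun D hD => hD.1)
  obtain ⟨D₀, hD₀⟩ := h
  obtain ⟨M, hMS, hmin'⟩ := hSfin.exists_minimal ⟨D₀, hD₀⟩
  have hmin : ∀ a' ∈ S, a' ≤ M → M = a' := fun a' ha' hle => le_antisymm (hmin' ha' hle) hle
  refine ⟨M, hMS.1, hMS.2, ?_⟩
  intro E hE hAE
  have hME : M ∩ E ∈ S := by
    refine ⟨F.faces_mem M hMS.1 (M ∩ E) (F.inter_face M hMS.1 E hE), ?_⟩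
    exact Set.subset_inter hMS.2 hAE
  have hMeq : M = M ∩ E := hmin (M ∩ E) hME (Set.inter_subset_left)
  intro x hx
  rw [hMeq] at hx
  exact hx.2

lemma minCone_unique {F : Fan N} {A C₁ C₂ : Set (V N)}
    (h1 : IsMinConeOver F A C₁) (h2 : IsMinConeOver F A C₂) : C₁ = C₂ :=
  Set.Subset.antisymm (h1.2.2 C₂ h2.1 h2.2.1) (h2.2.2 C₁ h1.1 h1.2.1)

/-- Key linear-algebra step: the kernel of a functional vanishing on a
codimension-one subspace. -/
lemma inf_ker_eq {W U : Submodule ℝ (V N)} (hWU : W ≤ U)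
    (hdim : finrank ℝ U ≤ finrank ℝ W + 1) {a : (V N) →ₗ[ℝ] ℝ}
    (ha : ∀ w ∈ W, a w = 0) {x : V N} (hx : x ∈ U) (hax : a x ≠ 0) :
    U ⊓ LinearMap.ker a = W := by
  have hWK : W ≤ U ⊓ LinearMap.ker a := by
    intro w hw
    exact ⟨hWU hw, by simpa [LinearMap.mem_ker] using ha w hw⟩
  have hlt : U ⊓ LinearMap.ker a < U := by
    refine lt_of_le_of_ne inf_le_left (fun heq => hax ?_)
    have hx' : x ∈ U ⊓ LinearMap.ker a := by rw [heq]; exact hx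
    simpa [LinearMap.mem_ker] using hx'.2
  have hfr : finrank ℝ (U ⊓ LinearMap.ker a : Submodule ℝ (V N)) < finrank ℝ U :=
    Submodule.finrank_lt_finrank_of_lt hlt
  exact (Submodule.eq_of_le_of_finrank_le hWK (by omega)).symm

lemma prop_Q {W U : Submodule ℝ (V N)} (hWU : W ≤ U)
    (hdim : finrank ℝ U ≤ finrank ℝ W + 1) {a b : (V N) →ₗ[ℝ] ℝ}
    (ha : ∀ w ∈ W, a w = 0) (hb : ∀ w ∈ W, b w = 0)
    {x : V N} (hx : x ∈ U) (hax : a x ≠ 0) {y : V N} (hy : y ∈ U) :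
    a x * b y = b x * a y := by
  have hker := inf_ker_eq hWU hdim ha hx hax
  have hz : a x • y - a y • x ∈ W := by
    rw [← hker]
    refine ⟨Submodule.sub_mem U (Submodule.smul_mem U _ hy) (Submodule.smul_mem U _ hx), ?_⟩
    simp [LinearMap.mem_ker, map_sub, map_smul, smul_eq_mul, mul_comm]
  have := hb _ hz
  simp only [map_sub, map_smul, smul_eq_mul] at this
  linarith [this]

/-- Opposite primitive normal vectors sum into the span of the facet. -/
lemma opposite_normals {σ τ' : Set (V N)} {u₁ u₂ : V N}
    (gen₁ : ∀ x ∈ coneLattice σ, ∃ k : ℤ, x - k • u₁ ∈ coneLattice τ')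
    (gen₂ : ∀ x ∈ coneLattice σ, ∃ k : ℤ, x - k • u₂ ∈ coneLattice τ')
    (hu₁ : u₁ ∈ coneLattice σ) (hu₂ : u₂ ∈ coneLattice σ)
    {h : (V N) →ₗ[ℝ] ℝ} (hh : ∀ x ∈ coneSpan τ', h x = 0)
    (h₁ : 0 < h u₁) (h₂ : h u₂ < 0) : u₁ + u₂ ∈ coneSpan τ' := by
  have hmemL : ∀ z ∈ coneLattice τ', z ∈ coneSpan τ' := fun z hz => hz.1
  obtain ⟨k, hk⟩ := gen₁ u₂ hu₂
  obtain ⟨k', hk'⟩ := gen₂ u₁ hu₁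
  have e1 : h u₂ = (k : ℝ) * h u₁ := by
    have h0 := hh _ (hmemL _ hk)
    rw [map_sub, map_zsmul, zsmul_eq_mul] at h0
    linarith
  have e2 : h u₁ = (k' : ℝ) * h u₂ := by
    have h0 := hh _ (hmemL _ hk')
    rw [map_sub, map_zsmul, zsmul_eq_mul] at h0
    linarith
  have hre : (1 - (k : ℝ) * (k' : ℝ)) * h u₁ = 0 := by nlinarith [e1, e2]
  have hzero : (1 - (k : ℝ) * (k' : ℝ)) = 0 := by
    rcases mul_eq_zero.mp hre with h0 | h0
    · exact h0
    · exact absurd h0 (ne_of_gt h₁)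
  have hkk' : k * k' = 1 := by
    have : ((k * k' : ℤ) : ℝ) = 1 := by push_cast; linarith
    exact_mod_cast this
  have hkneg : k = -1 := by
    rcases Int.mul_eq_one_iff_eq_one_or_neg_one.mp hkk' with ⟨h1', _⟩ | ⟨h1', _⟩
    · exfalso
      rw [h1'] at e1
      simp only [Int.cast_one, one_mul] at e1
      linarith
    · exact h1'
  have : u₂ - (-1 : ℤ) • u₁ ∈ coneLattice τ' := hkneg ▸ hk
  have hmem : u₂ + u₁ ∈ coneSpan τ' := by
    have := hmemL _ this
    simpa [neg_smul, sub_neg_eq_add] using this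
  simpa [add_comm] using hmem

end Aux3
section Aux4

open Module

variable {N : ℕ}

lemma dim_span_le {n : ℕ} (hn : 1 ≤ n) {τ' σ' : Set (V N)} (hsub : τ' ⊆ σ')
    (hd1 : coneDim σ' = n) (hdτ : coneDim τ' = n - 1) :
    finrank ℝ (coneSpan σ') ≤ finrank ℝ (coneSpan τ') + 1 := by
  unfold coneDim at hd1 hdτ
  omega

lemma side_lemma {n : ℕ} (hn : 1 ≤ n) {τ' σ' : Set (V N)}
    (hface : IsFace τ' σ') (hne : τ' ≠ σ')
    (hd1 : coneDim σ' = n) (hdτ : coneDim τ' = n - 1)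
    {h : (V N) →ₗ[ℝ] ℝ} (hh : ∀ x ∈ coneSpan τ', h x = 0)
    {x₀ : V N} (hx₀ : x₀ ∈ σ') (hx₀ne : h x₀ ≠ 0)
    {u : V N} (hu : IsNormalVector τ' σ' u) :
    (∀ x ∈ σ', 0 ≤ h x₀ * h x) ∧ 0 < h x₀ * h u := by
  obtain ⟨-, -, hsub, c', hcpos, hceq⟩ := hface
  have hWU : coneSpan τ' ≤ coneSpan σ' := coneSpan_mono hsub
  have hdim := dim_span_le hn hsub hd1 hdτ
  set a := evalFormLM c' with ha_def
  have ha : ∀ w ∈ coneSpan τ', a w = 0 := by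
    apply vanish_span
    intro x hx
    rw [hceq] at hx
    exact hx.2
  have hx'ex : ∃ x' ∈ σ', a x' ≠ 0 := by
    by_contra hcon
    push_neg at hcon
    apply hne
    rw [hceq]
    ext z
    exact ⟨fun hz => hz.1, fun hz => ⟨hz, hcon z hz⟩⟩
  obtain ⟨x', hx'σ, hax'ne⟩ := hx'ex
  have hax' : 0 < a x' := lt_of_le_of_ne (hcpos x' hx'σ) (Ne.symm hax'ne)
  have hx'U : x' ∈ coneSpan σ' := mem_coneSpan_self hx'σ
  obtain ⟨huL, hugen, g, hg0, hgpos, hgu⟩ := hu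
  have huU : u ∈ coneSpan σ' := huL.1
  -- proportionality of h and g with a on the span of σ'
  have Q1 : ∀ y ∈ coneSpan σ', a x' * h y = h x' * a y :=
    fun y hy => prop_Q hWU hdim ha hh hx'U hax'ne hy
  have Qg : a x' * g u = g x' * a u :=
    prop_Q hWU hdim ha hg0 hx'U hax'ne huU
  have hgx' : 0 ≤ g x' := hgpos x' hx'σ
  have hau : 0 < a u := by nlinarith [mul_pos hax' hgu]
  have e0 : a x' * h x₀ = h x' * a x₀ := Q1 x₀ (mem_coneSpan_self hx₀)
  have hax₀ : 0 ≤ a x₀ := hcpos x₀ hx₀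
  have hax₀pos : 0 < a x₀ := by
    rcases lt_or_eq_of_le hax₀ with h' | h'
    · exact h'
    · exfalso
      apply hx₀ne
      have hz : a x' * h x₀ = 0 := by rw [e0, ← h']; ring
      exact (mul_eq_zero.mp hz).resolve_left hax'ne
  have hhx'ne : h x' ≠ 0 := by
    intro h0
    apply hx₀ne
    have hz : a x' * h x₀ = 0 := by rw [e0, h0]; ring
    exact (mul_eq_zero.mp hz).resolve_left hax'ne
  constructor
  · intro x hx
    have ex : a x' * h x = h x' * a x := Q1 x (mem_coneSpan_self hx)
    have hax : 0 ≤ a x := hcpos x hx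
    have key : (a x' * a x') * (h x₀ * h x) = (h x' * h x') * (a x₀ * a x) := by
      rw [show (a x' * a x') * (h x₀ * h x) = (a x' * h x₀) * (a x' * h x) from by ring,
        e0, ex]
      ring
    nlinarith [key, mul_pos hax' hax',
      mul_nonneg (mul_self_nonneg (h x')) (mul_nonneg hax₀ hax)]
  · have eu : a x' * h u = h x' * a u := Q1 u huU
    have h1 : 0 < (h x') * (h x') := mul_self_pos.mpr hhx'ne
    have key : (a x' * a x') * (h x₀ * h u) = (h x' * h x') * (a x₀ * a u) := by
      rw [show (a x' * a x') * (h x₀ * h u) = (a x' * h x₀) * (a x' * h u) from by ring,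
        e0, eu]
      ring
    nlinarith [key, mul_pos hax' hax', mul_pos (mul_pos h1 hax₀pos) hau]

lemma exists_pos_forall_nonneg {ι : Type*} (s : Finset ι) (a b : ι → ℝ)
    (h : ∀ i ∈ s, 0 ≤ a i ∧ (b i < 0 → 0 < a i)) :
    ∃ ε : ℝ, 0 < ε ∧ ∀ i ∈ s, 0 ≤ a i + ε * b i := by
  classical
  induction s using Finset.induction_on with
  | empty => exact ⟨1, one_pos, by simp⟩
  | insert i s hnot ih =>
      obtain ⟨ε, hε, hall⟩ := ih fun j hj => h j (Finset.mem_insert_of_mem hj)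
      have hi := h i (s.mem_insert_self i)
      rcases le_or_gt 0 (b i) with hbi | hbi
      · refine ⟨ε, hε, ?_⟩
        intro j hj
        rcases Finset.mem_insert.mp hj with rfl | hj'
        · exact add_nonneg hi.1 (mul_nonneg hε.le hbi)
        · exact hall j hj'
      · have hai : 0 < a i := hi.2 hbi
        have hbipos : 0 < -b i := by linarith
        refine ⟨min ε (a i / (-b i)), lt_min hε (div_pos hai hbipos), ?_⟩
        intro j hj
        have hmle : min ε (a i / (-b i)) ≤ ε := min_le_left _ _
        have hmpos : 0 < min ε (a i / (-b i)) := lt_min hε (div_pos hai hbipos)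
        rcases Finset.mem_insert.mp hj with rfl | hj'
        · have h1 : min ε (a j / (-b j)) ≤ a j / (-b j) := min_le_right _ _
          have h2 : min ε (a j / (-b j)) * (-b j) ≤ a j :=
            (le_div_iff₀ (by linarith)).mp h1
          linarith
        · have h0 := hall j hj'
          rcases le_or_gt 0 (b j) with hbj | hbj
          · have ha0 := (h j (Finset.mem_insert_of_mem hj')).1
            nlinarith [mul_nonneg hmpos.le hbj]
          · nlinarith [mul_nonneg (sub_nonneg.mpr hmle) (neg_nonneg.mpr hbj.le)]
end Aux4
section Aux5

open Module

variable {N : ℕ}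

lemma exists_pos_uniform_finset {α : Type*} (s : Finset α) (P : α → ℝ → Prop)
    (h : ∀ z ∈ s, ∃ d : ℝ, 0 < d ∧ ∀ e : ℝ, 0 < e → e ≤ d → P z e) :
    ∃ d : ℝ, 0 < d ∧ ∀ e : ℝ, 0 < e → e ≤ d → ∀ z ∈ s, P z e := by
  classical
  induction s using Finset.induction_on with
  | empty => exact ⟨1, one_pos, fun e he hle z hz => absurd hz (by simp)⟩
  | insert a s hnot ih =>
      obtain ⟨d₁, hd₁, h₁⟩ := h a (s.mem_insert_self a)
      obtain ⟨d₂, hd₂, h₂⟩ := ih fun z hz => h z (Finset.mem_insert_of_mem hz)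
      refine ⟨min d₁ d₂, lt_min hd₁ hd₂, fun e he hle z hz => ?_⟩
      rcases Finset.mem_insert.mp hz with rfl | hz'
      · exact h₁ e he (le_trans hle (min_le_left _ _))
      · exact h₂ e he (le_trans hle (min_le_right _ _)) z hz'

lemma exists_pos_uniform {α : Type*} {T : Set α} (hT : T.Finite) (P : α → ℝ → Prop)
    (h : ∀ z ∈ T, ∃ d : ℝ, 0 < d ∧ ∀ e : ℝ, 0 < e → e ≤ d → P z e) :
    ∃ d : ℝ, 0 < d ∧ ∀ e : ℝ, 0 < e → e ≤ d → ∀ z ∈ T, P z e := by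
  obtain ⟨d, hd, hall⟩ := exists_pos_uniform_finset hT.toFinset P
    (fun z hz => h z (hT.mem_toFinset.mp hz))
  exact ⟨d, hd, fun e he hle z hz => hall e he hle z (hT.mem_toFinset.mpr hz)⟩

lemma evalForm_seg (c : Fin N → ℤ) (p xb : V N) (e : ℝ) :
    evalForm c (p + e • xb) = evalForm c p + e * evalForm c xb := by
  have := (evalFormLM c).map_add p (e • xb)
  rw [map_smul] at this
  simpa [smul_eq_mul] using this

/-- Moving slightly off a generic point of `τ'` inside the support, we stay in
cones containing `τ'`; by purity we land in a top-dimensional cone over `τ'`. -/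
lemma exists_side_cone {n : ℕ} (Y : WeightedFan N n) {τ' : Set (V N)}
    (hτ' : τ' ∈ Y.toFan.cones) {p : V N} (hp : p ∈ τ')
    (hgen : ∀ (φ : (V N) →ₗ[ℝ] ℝ), (∀ x ∈ τ', 0 ≤ φ x) → φ p = 0 →
      ∀ x ∈ coneSpan τ', φ x = 0)
    {xb : V N} (hsupp : ∀ ε : ℝ, 0 < ε → p + ε • xb ∈ Y.toFan.support) :
    ∃ ε : ℝ, 0 < ε ∧ ∃ σ', (σ' ∈ Y.toFan.cones ∧ coneDim σ' = n) ∧ τ' ⊆ σ' ∧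
      p + ε • xb ∈ σ' := by
  classical
  set T : Set (Set (V N)) := {Z | Z ∈ Y.toFan.cones ∧ p ∉ Z} with hT_def
  have hTfin : T.Finite := Y.toFan.finite.subset fun Z hZ => hZ.1
  have havoid : ∀ Z ∈ T, ∃ d : ℝ, 0 < d ∧ ∀ e : ℝ, 0 < e → e ≤ d → p + e • xb ∉ Z := by
    intro Z hZ
    obtain ⟨n₁, m₁, f, g, hrepr⟩ := Y.toFan.isCone Z hZ.1
    have hpZ := hZ.2
    rw [hrepr] at hpZ
    simp only [Set.mem_setOf_eq, not_and_or] at hpZ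
    rcases hpZ with hf | hg
    · push_neg at hf
      obtain ⟨i, hi⟩ := hf
      set A := |evalForm (f i) p| with hA
      set B := |evalForm (f i) xb| with hB
      have hApos : 0 < A := abs_pos.mpr hi
      refine ⟨A / (B + 1), div_pos hApos (by positivity), ?_⟩
      intro e he hle hmem
      rw [hrepr] at hmem
      have h0 := hmem.1 i
      rw [evalForm_seg] at h0
      have h1 : A = e * B := by
        have hEq : evalForm (f i) p = -(e * evalForm (f i) xb) := by linarith
        rw [hA, hEq, abs_neg, abs_mul, abs_of_pos he, hB]
      have h2 : e * (B + 1) ≤ A := (le_div_iff₀ (by positivity)).mp hle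
      nlinarith
    · push_neg at hg
      obtain ⟨j, hj⟩ := hg
      set A := -evalForm (g j) p with hA
      set B := |evalForm (g j) xb| with hB
      have hApos : 0 < A := by rw [hA]; linarith
      refine ⟨A / (B + 1), div_pos hApos (by positivity), ?_⟩
      intro e he hle hmem
      rw [hrepr] at hmem
      have h0 := hmem.2 j
      rw [evalForm_seg] at h0
      have h1 : e * evalForm (g j) xb ≤ e * B :=
        mul_le_mul_of_nonneg_left (le_abs_self _) he.le
      have h2 : e * (B + 1) ≤ A := (le_div_iff₀ (by positivity)).mp hle
      nlinarith
  obtain ⟨d, hd, hP⟩ := exists_pos_uniform hTfin (fun Z e => p + e • xb ∉ Z) havoid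
  have hq := hsupp d hd
  unfold Fan.support at hq
  simp only [Set.mem_iUnion, exists_prop] at hq
  obtain ⟨Z₀, hZ₀mem, hqZ₀⟩ := hq
  have hpZ₀ : p ∈ Z₀ := by
    by_contra hpz
    exact hP d hd le_rfl Z₀ ⟨hZ₀mem, hpz⟩ hqZ₀
  obtain ⟨-, -, -, c, hcpos, hceq⟩ := Y.toFan.inter_face τ' hτ' Z₀ hZ₀mem
  have hcp : evalFormLM c p = 0 := by
    have hmem : p ∈ τ' ∩ Z₀ := ⟨hp, hpZ₀⟩
    rw [hceq] at hmem
    exact hmem.2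
  have hsubZ : τ' ⊆ Z₀ := by
    intro x hx
    have hcx := hgen (evalFormLM c) hcpos hcp x (mem_coneSpan_self hx)
    have : x ∈ τ' ∩ Z₀ := by
      rw [hceq]
      exact ⟨hx, hcx⟩
    exact this.2
  obtain ⟨σ', hσ'top, hZσ'⟩ := Y.pure Z₀ hZ₀mem
  exact ⟨d, hd, σ', ⟨hσ'top.1, hσ'top.2⟩, Set.Subset.trans hsubZ hZσ', hZσ' hqZ₀⟩

/-- Two top-dimensional cones of a fan with a common facet, the same span, and
lying on the same side of the facet coincide. -/
lemma unique_side_cone {n : ℕ} (hn : 1 ≤ n) (Y : Fan N) {τ' σ₁ σ₂ : Set (V N)}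
    (hτ' : τ' ∈ Y.cones) (h1 : σ₁ ∈ Y.cones) (h2 : σ₂ ∈ Y.cones)
    (hsub1 : τ' ⊆ σ₁) (hsub2 : τ' ⊆ σ₂)
    (hd1 : coneDim σ₁ = n) (hd2 : coneDim σ₂ = n) (hdτ : coneDim τ' = n - 1)
    (hspan : coneSpan σ₂ ≤ coneSpan σ₁)
    {h : (V N) →ₗ[ℝ] ℝ} (hh : ∀ x ∈ coneSpan τ', h x = 0)
    (hpos1 : ∀ x ∈ σ₁, 0 ≤ h x)
    {xb : V N} (hxb : xb ∈ σ₂) (hxbpos : 0 < h xb)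
    {x₁ : V N} (hx₁ : x₁ ∈ σ₁) (hx₁pos : 0 < h x₁) : σ₁ = σ₂ := by
  classical
  obtain ⟨p, hp, hgen⟩ := exists_generic (Y.isCone τ' hτ')
  obtain ⟨n₁, m₁, f, g, hrepr⟩ := Y.isCone σ₁ h1
  have hWU : coneSpan τ' ≤ coneSpan σ₁ := coneSpan_mono hsub1
  have hdim := dim_span_le hn hsub1 hd1 hdτ
  have hxbU : xb ∈ coneSpan σ₁ := hspan (mem_coneSpan_self hxb)
  have hx₁U : x₁ ∈ coneSpan σ₁ := mem_coneSpan_self hx₁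
  have hpσ₁ : p ∈ σ₁ := hsub1 hp
  have hpmem := hpσ₁
  rw [hrepr] at hpmem
  -- choose a uniform ε for the inequality constraints of σ₁
  have hcond : ∀ j ∈ (Finset.univ : Finset (Fin m₁)), 0 ≤ evalForm (g j) p ∧
      (evalForm (g j) xb < 0 → 0 < evalForm (g j) p) := by
    intro j _
    refine ⟨hpmem.2 j, ?_⟩
    intro hneg
    rcases lt_or_eq_of_le (hpmem.2 j) with h' | h'
    · exact h'
    · exfalso
      have hgτ : ∀ x ∈ τ', 0 ≤ evalFormLM (g j) x := by
        intro x hx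
        have : x ∈ σ₁ := hsub1 hx
        rw [hrepr] at this
        exact this.2 j
      have hvan := hgen (evalFormLM (g j)) hgτ h'.symm
      have hQ := prop_Q hWU hdim hvan hh hxbU (ne_of_lt hneg) hx₁U
      -- g xb * h x₁ = h xb * g x₁ ; lhs < 0, rhs ≥ 0
      have hgx₁ : 0 ≤ evalFormLM (g j) x₁ := by
        have : x₁ ∈ σ₁ := hx₁
        rw [hrepr] at this
        exact this.2 j
      simp only [evalFormLM_apply] at hQ hgx₁
      linarith [hQ, mul_neg_of_neg_of_pos hneg hx₁pos, mul_nonneg hxbpos.le hgx₁]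
  obtain ⟨ε, hε, hall⟩ := exists_pos_forall_nonneg Finset.univ
    (fun j => evalForm (g j) p) (fun j => evalForm (g j) xb) hcond
  set q := p + ε • xb with hq_def
  have hqσ₁ : q ∈ σ₁ := by
    rw [hrepr]
    constructor
    · intro i
      rw [evalForm_seg]
      have hfp : evalForm (f i) p = 0 := hpmem.1 i
      have hfxb : evalFormLM (f i) xb = 0 := by
        refine vanish_span (S := σ₁) ?_ xb hxbU
        intro y hy
        rw [hrepr] at hy
        exact hy.1 i
      simp only [evalFormLM_apply] at hfxb
      rw [hfp, hfxb]
      ring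
    · intro j
      rw [evalForm_seg]
      exact hall j (Finset.mem_univ j)
  have hqσ₂ : q ∈ σ₂ := by
    have := (Y.isCone σ₂ h2).combo_mem (hsub2 hp) hxb zero_le_one hε.le
    simpa [hq_def] using this
  have hhp : h p = 0 := hh p (mem_coneSpan_self hp)
  have hhq : 0 < h q := by
    rw [hq_def]
    rw [map_add, map_smul, smul_eq_mul, hhp]
    have : 0 < ε * h xb := mul_pos hε hxbpos
    linarith
  -- the intersection is a common face of full dimension
  have hFface1 : IsFace (σ₁ ∩ σ₂) σ₁ := Y.inter_face σ₁ h1 σ₂ h2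
  have hFface2 : IsFace (σ₁ ∩ σ₂) σ₂ := by
    have := Y.inter_face σ₂ h2 σ₁ h1
    rwa [Set.inter_comm] at this
  have hFmem : σ₁ ∩ σ₂ ∈ Y.cones := Y.faces_mem σ₁ h1 _ hFface1
  have hqF : q ∈ σ₁ ∩ σ₂ := ⟨hqσ₁, hqσ₂⟩
  have hqW : q ∉ coneSpan τ' := fun hmem => by
    have := hh q hmem
    linarith
  have hτF : τ' ⊆ σ₁ ∩ σ₂ := Set.subset_inter hsub1 hsub2
  have hdimF : coneDim σ₁ ≤ coneDim (σ₁ ∩ σ₂) := by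
    have hsup : coneSpan τ' ⊔ Submodule.span ℝ {q} ≤ coneSpan (σ₁ ∩ σ₂) :=
      sup_le (coneSpan_mono hτF)
        (Submodule.span_le.mpr (Set.singleton_subset_iff.mpr (mem_coneSpan_self hqF)))
    have hlt : coneSpan τ' < coneSpan τ' ⊔ Submodule.span ℝ {q} := by
      refine lt_of_le_of_ne le_sup_left fun heq => hqW ?_
      rw [heq]
      exact Submodule.mem_sup_right (Submodule.mem_span_singleton_self q)
    have h1' : finrank ℝ ↥(coneSpan τ') < finrank ℝ ↥(coneSpan τ' ⊔ Submodule.span ℝ {q}) :=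
      Submodule.finrank_lt_finrank_of_lt hlt
    have h2' : finrank ℝ ↥(coneSpan τ' ⊔ Submodule.span ℝ {q}) ≤
        finrank ℝ ↥(coneSpan (σ₁ ∩ σ₂)) :=
      Submodule.finrank_mono hsup
    unfold coneDim at hdτ hd1 ⊢
    omega
  have hF1 : σ₁ ∩ σ₂ = σ₁ :=
    Y.eq_of_subset_of_dim_le hFmem h1 Set.inter_subset_left hdimF
  have hF2 : σ₁ ∩ σ₂ = σ₂ := by
    refine Y.eq_of_subset_of_dim_le hFmem h2 Set.inter_subset_right ?_
    rw [hd2, ← hd1]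
    exact hdimF
  rw [← hF1, hF2]

end Aux5
section Aux6

open Module

variable {N : ℕ}

/-- The set of top-dimensional cones strictly over a facet, as used in the
balancing condition. -/
def topsOver (F : Fan N) (n : ℕ) (τ : Set (V N)) : Set (Set (V N)) :=
  {σ | σ ∈ F.conesOfDim n ∧ IsFace τ σ ∧ τ ≠ σ}

lemma mem_topsOver {F : Fan N} {n : ℕ} (hn : 1 ≤ n) {τ σ : Set (V N)}
    (hτ : τ ∈ F.cones) (hτd : coneDim τ = n - 1) :
    σ ∈ topsOver F n τ ↔ σ ∈ F.cones ∧ coneDim σ = n ∧ τ ⊆ σ := by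
  constructor
  · rintro ⟨⟨hm, hd⟩, hface, -⟩
    exact ⟨hm, hd, hface.subset'⟩
  · rintro ⟨hm, hd, hsub⟩
    refine ⟨⟨hm, hd⟩, F.isFace_of_subset hτ hm hsub, ?_⟩
    intro heq
    rw [heq] at hτd
    omega

lemma coneLattice_congr {A B : Set (V N)} (h : coneSpan A = coneSpan B) :
    coneLattice A = coneLattice B := by
  unfold coneLattice
  rw [h]

set_option maxHeartbeats 1000000 in
/-- Case A: the minimal cone over the facet `τ'` is top-dimensional. Then the
local structure is two cones glued along `τ'` with opposite normal vectors, and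
balancing holds automatically. -/
lemma balanced_caseA {n : ℕ} (hn : 1 ≤ n) (X Y : WeightedFan N n)
    (href : IsRefinement Y X) {τ' : Set (V N)}
    (hτ'mem : τ' ∈ Y.toFan.cones) (hτ'd : coneDim τ' = n - 1)
    {C : Set (V N)} (hC : IsMinConeOver X.toFan τ' C) (hCd : coneDim C = n)
    (u' : Set (V N) → V N)
    (hu' : ∀ σ ∈ Y.toFan.conesOfDim n, IsFace τ' σ → τ' ≠ σ → IsNormalVector τ' σ (u' σ)) :
    (∑ᶠ σ ∈ topsOver Y.toFan n τ', Y.weight σ • u' σ) ∈ coneSpan τ' := by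
  classical
  obtain ⟨hCmem, hτC, hCmin⟩ := hC
  -- every X-cone containing τ' is C
  have huniqX : ∀ E ∈ X.toFan.cones, τ' ⊆ E → E = C := by
    intro E hE hτE
    refine (X.toFan.eq_of_subset_of_dim_le hCmem hE (hCmin E hE hτE) ?_).symm
    rw [hCd]
    exact X.toFan.coneDim_le_of_pure X.pure hE
  -- properties of members of the local fan
  have hS : ∀ σ ∈ topsOver Y.toFan n τ', σ ⊆ C ∧ coneSpan σ = coneSpan C ∧
      Y.weight σ = X.weight C := by
    intro σ hσ
    obtain ⟨hσc, hσd, hτσ⟩ := (mem_topsOver hn hτ'mem hτ'd).mp hσ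
    obtain ⟨E, hE, hσE⟩ := href.1 σ hσc
    have hEC : E = C := huniqX E hE (Set.Subset.trans hτσ hσE)
    have hσC : σ ⊆ C := hEC ▸ hσE
    have hspan : coneSpan σ = coneSpan C := by
      refine Submodule.eq_of_le_of_finrank_le (coneSpan_mono hσC) ?_
      show coneDim C ≤ coneDim σ
      rw [hCd, hσd]
    have hmin : IsMinConeOver X.toFan σ C :=
      ⟨hCmem, hσC, fun E' hE' hσE' => le_of_eq
        (huniqX E' hE' (Set.Subset.trans hτσ hσE')).symm⟩
    exact ⟨hσC, hspan, href.2.2 σ ⟨hσc, hσd⟩ C hmin⟩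
  -- the first top cone over τ'
  obtain ⟨σ₀, hσ₀top, hτσ₀⟩ := Y.pure τ' hτ'mem
  have hσ₀S : σ₀ ∈ topsOver Y.toFan n τ' :=
    (mem_topsOver hn hτ'mem hτ'd).mpr ⟨hσ₀top.1, hσ₀top.2, hτσ₀⟩
  have hne₀ : τ' ≠ σ₀ := hσ₀S.2.2
  obtain ⟨-, -, -, c₁, hc₁pos, hc₁eq⟩ := hσ₀S.2.1
  set h := evalFormLM c₁ with hh_def
  have hh : ∀ x ∈ coneSpan τ', h x = 0 := by
    apply vanish_span
    intro x hx
    rw [hc₁eq] at hx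
    exact hx.2
  have hx₁ex : ∃ x₁ ∈ σ₀, 0 < h x₁ := by
    by_contra hcon
    push_neg at hcon
    apply hne₀
    rw [hc₁eq]
    ext z
    refine ⟨fun hz => hz.1, fun hz => ⟨hz, le_antisymm (hcon z hz) (hc₁pos z hz)⟩⟩
  obtain ⟨x₁, hx₁σ₀, hx₁pos⟩ := hx₁ex
  have hσ₀C := (hS σ₀ hσ₀S).1
  -- a point of C on the other side
  have hxmex : ∃ xm ∈ C, h xm < 0 := by
    by_contra hcon
    push_neg at hcon
    have hFface := isFace_inter_ker (X.toFan.isCone C hCmem) c₁ hcon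
    have hFmem := X.toFan.faces_mem C hCmem _ hFface
    have hτF : τ' ⊆ {x ∈ C | evalForm c₁ x = 0} := by
      intro x hx
      refine ⟨hτC hx, ?_⟩
      have : h x = 0 := hh x (mem_coneSpan_self hx)
      exact this
    have hCF := hCmin _ hFmem hτF
    have : h x₁ = 0 := (hCF (hσ₀C hx₁σ₀)).2
    linarith
  obtain ⟨xm, hxmC, hxmneg⟩ := hxmex
  -- generic point and the cone on the other side
  obtain ⟨p, hp, hgen⟩ := exists_generic (Y.toFan.isCone τ' hτ'mem)
  have hsupp : ∀ ε : ℝ, 0 < ε → p + ε • xm ∈ Y.toFan.support := by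
    intro ε hε
    have hqC : p + ε • xm ∈ C := by
      have := (X.toFan.isCone C hCmem).combo_mem (hτC hp) hxmC zero_le_one hε.le
      simpa using this
    rw [href.2.1]
    unfold Fan.support
    simp only [Set.mem_iUnion, exists_prop]
    exact ⟨C, hCmem, hqC⟩
  obtain ⟨ε, hε, σ₂, ⟨hσ₂mem, hσ₂d⟩, hτσ₂, hqσ₂⟩ :=
    exists_side_cone Y hτ'mem hp hgen hsupp
  set q := p + ε • xm with hq_def
  have hσ₂S : σ₂ ∈ topsOver Y.toFan n τ' :=
    (mem_topsOver hn hτ'mem hτ'd).mpr ⟨hσ₂mem, hσ₂d, hτσ₂⟩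
  have hhp : h p = 0 := hh p (mem_coneSpan_self hp)
  have hhq : h q < 0 := by
    rw [hq_def, map_add, map_smul, smul_eq_mul, hhp]
    nlinarith
  have hqpos0 : ∀ x ∈ σ₀, 0 ≤ h x := fun x hx => hc₁pos x hx
  have hne02 : σ₀ ≠ σ₂ := by
    intro heq
    have := hqpos0 q (heq ▸ hqσ₂)
    linarith
  -- normal vector sign bookkeeping
  have hnormal : ∀ σ ∈ topsOver Y.toFan n τ', IsNormalVector τ' σ (u' σ) := by
    intro σ hσ
    obtain ⟨hσ1, hσ2, hσ3⟩ := hσ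
    exact hu' σ hσ1 hσ2 hσ3
  have hside₀ := side_lemma hn hσ₀S.2.1 hσ₀S.2.2 hσ₀S.1.2 hτ'd hh hx₁σ₀
    (ne_of_gt hx₁pos) (hnormal σ₀ hσ₀S)
  have hu₀pos : 0 < h (u' σ₀) := by nlinarith [hside₀.2]
  have hside₂ := side_lemma hn hσ₂S.2.1 hσ₂S.2.2 hσ₂S.1.2 hτ'd hh hqσ₂
    (ne_of_lt hhq) (hnormal σ₂ hσ₂S)
  have hu₂neg : h (u' σ₂) < 0 := by nlinarith [hside₂.2]
  have hqpos2 : ∀ x ∈ σ₂, h x ≤ 0 := by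
    intro x hx
    have := hside₂.1 x hx
    nlinarith
  -- S = {σ₀, σ₂}
  have hSeq : topsOver Y.toFan n τ' = {σ₀, σ₂} := by
    ext σ₃
    constructor
    · intro hσ₃S
      obtain ⟨hσ₃mem, hσ₃d, hτσ₃⟩ := (mem_topsOver hn hτ'mem hτ'd).mp hσ₃S
      have hspan₃ : coneSpan σ₃ = coneSpan C := (hS σ₃ hσ₃S).2.1
      have hspan₀ : coneSpan σ₀ = coneSpan C := (hS σ₀ hσ₀S).2.1
      have hspan₂ : coneSpan σ₂ = coneSpan C := (hS σ₂ hσ₂S).2.1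
      have hx₃ex : ∃ x₃ ∈ σ₃, h x₃ ≠ 0 := by
        by_contra hcon
        push_neg at hcon
        have hvan : ∀ x ∈ coneSpan σ₃, h x = 0 := vanish_span hcon
        have : h xm = 0 := hvan xm (by rw [hspan₃]; exact mem_coneSpan_self hxmC)
        linarith
      obtain ⟨x₃, hx₃σ₃, hx₃ne⟩ := hx₃ex
      have hside₃ := side_lemma hn hσ₃S.2.1 hσ₃S.2.2 hσ₃d hτ'd hh hx₃σ₃ hx₃ne
        (hnormal σ₃ hσ₃S)
      rcases lt_or_gt_of_ne hx₃ne with hx₃neg | hx₃pos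
      · -- σ₃ on the negative side: σ₃ = σ₂
        right
        have hpos3 : ∀ x ∈ σ₃, h x ≤ 0 := by
          intro x hx
          have := hside₃.1 x hx
          nlinarith
        refine (unique_side_cone hn Y.toFan hτ'mem hσ₂mem hσ₃mem hτσ₂ hτσ₃ hσ₂d hσ₃d hτ'd
          (by rw [hspan₃, hspan₂]) (h := -h) (fun x hx => by simp [hh x hx])
          (fun x hx => by simpa using hqpos2 x hx)
          (xb := x₃) hx₃σ₃ (by simpa using hx₃neg)
          (x₁ := q) hqσ₂ (by simpa using hhq)).symm
      · -- σ₃ on the positive side: σ₃ = σ₀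
        left
        refine (unique_side_cone hn Y.toFan hτ'mem hσ₀S.1.1 hσ₃mem hτσ₀ hτσ₃ hσ₀S.1.2 hσ₃d
          hτ'd (by rw [hspan₃, hspan₀]) hh hqpos0
          (xb := x₃) hx₃σ₃ hx₃pos (x₁ := x₁) hx₁σ₀ hx₁pos).symm
    · intro hσ₃
      rcases hσ₃ with rfl | hσ₃
      · exact hσ₀S
      · rw [hσ₃]
        exact hσ₂S
  -- the two normal vectors are opposite modulo the span of τ'
  have hlat₂ : coneLattice σ₂ = coneLattice σ₀ :=
    coneLattice_congr (by rw [(hS σ₂ hσ₂S).2.1, (hS σ₀ hσ₀S).2.1])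
  have hgen₀ := (hnormal σ₀ hσ₀S).2.1
  have hgen₂ := (hnormal σ₂ hσ₂S).2.1
  rw [hlat₂] at hgen₂
  have hu₂mem := (hnormal σ₂ hσ₂S).1
  rw [hlat₂] at hu₂mem
  have hopp := opposite_normals hgen₀ hgen₂ (hnormal σ₀ hσ₀S).1 hu₂mem hh hu₀pos hu₂neg
  -- conclude
  rw [hSeq, finsum_mem_pair hne02, (hS σ₀ hσ₀S).2.2, (hS σ₂ hσ₂S).2.2, ← smul_add,
    ← Int.cast_smul_eq_zsmul ℝ]
  exact Submodule.smul_mem _ _ hopp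

end Aux6
section Aux7

open Module

variable {N : ℕ}

lemma span_facet_eq {n : ℕ} {τ' C : Set (V N)} (hτC : τ' ⊆ C)
    (hτ'd : coneDim τ' = n - 1) (hCd : coneDim C = n - 1) :
    coneSpan τ' = coneSpan C := by
  refine Submodule.eq_of_le_of_finrank_le (coneSpan_mono hτC) ?_
  show coneDim C ≤ coneDim τ'
  omega

/-- Case B, step 1: minimal cones over the top cones of `Y` at `τ'` are top
cones of `X` at `C`. -/
lemma bridgeB1 {n : ℕ} (hn : 1 ≤ n) (X Y : WeightedFan N n) (href : IsRefinement Y X)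
    {τ' C : Set (V N)} (hτ'mem : τ' ∈ Y.toFan.cones) (hτ'd : coneDim τ' = n - 1)
    (hC : IsMinConeOver X.toFan τ' C) (hCd : coneDim C = n - 1)
    {σ' D : Set (V N)} (hσ' : σ' ∈ topsOver Y.toFan n τ')
    (hD : IsMinConeOver X.toFan σ' D) :
    D ∈ topsOver X.toFan n C ∧ coneSpan σ' = coneSpan D ∧ σ' ⊆ D ∧
      Y.weight σ' = X.weight D := by
  obtain ⟨hσ'c, hσ'd, hτσ'⟩ := (mem_topsOver hn hτ'mem hτ'd).mp hσ'
  have hσ'D : σ' ⊆ D := hD.2.1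
  have hDd : coneDim D = n := by
    have h1 : coneDim σ' ≤ coneDim D := coneDim_mono hσ'D
    have h2 : coneDim D ≤ n := X.toFan.coneDim_le_of_pure X.pure hD.1
    omega
  have hspan : coneSpan σ' = coneSpan D := by
    refine Submodule.eq_of_le_of_finrank_le (coneSpan_mono hσ'D) ?_
    show coneDim D ≤ coneDim σ'
    omega
  have hCD : C ⊆ D := hC.2.2 D hD.1 (Set.Subset.trans hτσ' hσ'D)
  exact ⟨(mem_topsOver hn hC.1 hCd).mpr ⟨hD.1, hDd, hCD⟩, hspan, hσ'D,
    href.2.2 σ' ⟨hσ'c, hσ'd⟩ D hD⟩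

/-- Case B, step 2: distinct top cones of `Y` at `τ'` have distinct minimal
cones. -/
lemma bridgeB2 {n : ℕ} (hn : 1 ≤ n) (X Y : WeightedFan N n) (href : IsRefinement Y X)
    {τ' C : Set (V N)} (hτ'mem : τ' ∈ Y.toFan.cones) (hτ'd : coneDim τ' = n - 1)
    (hC : IsMinConeOver X.toFan τ' C) (hCd : coneDim C = n - 1)
    {σ'₁ σ'₂ D : Set (V N)} (hσ'₁ : σ'₁ ∈ topsOver Y.toFan n τ')
    (hσ'₂ : σ'₂ ∈ topsOver Y.toFan n τ')
    (hD1 : IsMinConeOver X.toFan σ'₁ D) (hD2 : IsMinConeOver X.toFan σ'₂ D) :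
    σ'₁ = σ'₂ := by
  obtain ⟨hDtop, hspan1, hsub1, -⟩ := bridgeB1 hn X Y href hτ'mem hτ'd hC hCd hσ'₁ hD1
  obtain ⟨-, hspan2, hsub2, -⟩ := bridgeB1 hn X Y href hτ'mem hτ'd hC hCd hσ'₂ hD2
  obtain ⟨m1, m1d, ts1⟩ := (mem_topsOver hn hτ'mem hτ'd).mp hσ'₁
  obtain ⟨m2, m2d, ts2⟩ := (mem_topsOver hn hτ'mem hτ'd).mp hσ'₂
  obtain ⟨-, -, -, c, hcpos, hceq⟩ := hDtop.2.1
  set h := evalFormLM c with hhdef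
  have hspanτC : coneSpan τ' = coneSpan C := span_facet_eq hC.2.1 hτ'd hCd
  have hh : ∀ x ∈ coneSpan τ', h x = 0 := by
    rw [hspanτC]
    apply vanish_span
    intro x hx
    rw [hceq] at hx
    exact hx.2
  have hDd : coneDim D = n := hDtop.1.2
  have hexpos : ∀ σ'ᵢ ∈ topsOver Y.toFan n τ', σ'ᵢ ⊆ D → coneDim σ'ᵢ = n →
      ∃ x ∈ σ'ᵢ, 0 < h x := by
    intro σ'ᵢ hσᵢ hsubD hdᵢ
    by_contra hcon
    push_neg at hcon
    have hzero : ∀ x ∈ σ'ᵢ, h x = 0 := fun x hx =>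
      le_antisymm (hcon x hx) (hcpos x (hsubD hx))
    have hsubC : σ'ᵢ ⊆ C := by
      intro x hx
      rw [hceq]
      exact ⟨hsubD hx, hzero x hx⟩
    have := coneDim_mono hsubC
    omega
  obtain ⟨x₁, hx₁m, hx₁pos⟩ := hexpos σ'₁ hσ'₁ hsub1 m1d
  obtain ⟨xb, hxbm, hxbpos⟩ := hexpos σ'₂ hσ'₂ hsub2 m2d
  exact unique_side_cone hn Y.toFan hτ'mem m1 m2 ts1 ts2 m1d m2d hτ'd
    (by rw [hspan2, ← hspan1]) hh (fun x hx => hcpos x (hsub1 hx)) hxbm hxbpos hx₁m hx₁pos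

/-- Case B, step 3: every top cone of `X` at `C` arises as the minimal cone of
some top cone of `Y` at `τ'`. -/
lemma bridgeB3 {n : ℕ} (hn : 1 ≤ n) (X Y : WeightedFan N n) (href : IsRefinement Y X)
    {τ' C : Set (V N)} (hτ'mem : τ' ∈ Y.toFan.cones) (hτ'd : coneDim τ' = n - 1)
    (hC : IsMinConeOver X.toFan τ' C) (hCd : coneDim C = n - 1)
    {σ : Set (V N)} (hσ : σ ∈ topsOver X.toFan n C) :
    ∃ σ' ∈ topsOver Y.toFan n τ', IsMinConeOver X.toFan σ' σ := by
  obtain ⟨hσmem, hσd, hCσ⟩ := (mem_topsOver hn hC.1 hCd).mp hσ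
  have hspanτC : coneSpan τ' = coneSpan C := span_facet_eq hC.2.1 hτ'd hCd
  -- a point of σ outside the span of C
  have hxbex : ∃ xb ∈ σ, xb ∉ coneSpan C := by
    by_contra hcon
    push_neg at hcon
    have hle : coneSpan σ ≤ coneSpan C := Submodule.span_le.mpr fun x hx => hcon x hx
    have := Submodule.finrank_mono hle
    unfold coneDim at hσd hCd
    omega
  obtain ⟨xb, hxbσ, hxbC⟩ := hxbex
  obtain ⟨φ, hφ0, hφxb⟩ := exists_functional hxbC
  obtain ⟨p, hp, hgen⟩ := exists_generic (Y.toFan.isCone τ' hτ'mem)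
  have hpC : p ∈ C := hC.2.1 hp
  have hsupp : ∀ ε : ℝ, 0 < ε → p + ε • xb ∈ Y.toFan.support := by
    intro ε hε
    have hqσ : p + ε • xb ∈ σ := by
      have := (X.toFan.isCone σ hσmem).combo_mem (hCσ hpC) hxbσ zero_le_one hε.le
      simpa using this
    rw [href.2.1]
    unfold Fan.support
    simp only [Set.mem_iUnion, exists_prop]
    exact ⟨σ, hσmem, hqσ⟩
  obtain ⟨ε, hε, σ', ⟨hσ'mem, hσ'd⟩, hτσ', hqσ'⟩ :=
    exists_side_cone Y hτ'mem hp hgen hsupp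
  set q := p + ε • xb with hq_def
  have hσ'S : σ' ∈ topsOver Y.toFan n τ' :=
    (mem_topsOver hn hτ'mem hτ'd).mpr ⟨hσ'mem, hσ'd, hτσ'⟩
  obtain ⟨D, hD⟩ := exists_minCone X.toFan (href.1 σ' hσ'mem)
  have hqσ : q ∈ σ := by
    have := (X.toFan.isCone σ hσmem).combo_mem (hCσ hpC) hxbσ zero_le_one hε.le
    simpa [hq_def] using this
  have hqD : q ∈ D := hD.2.1 hqσ'
  have hCD : C ⊆ D := hC.2.2 D hD.1 (Set.Subset.trans hτσ' hD.2.1)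
  -- q is not in the span of C
  have hqC : q ∉ coneSpan C := by
    intro hmem
    apply hφxb
    have hφp : φ p = 0 := hφ0 p (mem_coneSpan_self hpC)
    have := hφ0 q hmem
    rw [hq_def, map_add, map_smul, smul_eq_mul, hφp] at this
    have : ε * φ xb = 0 := by linarith
    rcases mul_eq_zero.mp this with h' | h'
    · exact absurd h' (ne_of_gt hε)
    · exact h'
  -- σ ∩ D has full dimension in σ, hence σ ⊆ D, hence D = σ
  have hEface : IsFace (σ ∩ D) σ := X.toFan.inter_face σ hσmem D hD.1
  have hEmem : σ ∩ D ∈ X.toFan.cones := X.toFan.faces_mem σ hσmem _ hEface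
  have hqE : q ∈ σ ∩ D := ⟨hqσ, hqD⟩
  have hCE : C ⊆ σ ∩ D := Set.subset_inter hCσ hCD
  have hdimE : coneDim σ ≤ coneDim (σ ∩ D) := by
    have hsup : coneSpan C ⊔ Submodule.span ℝ {q} ≤ coneSpan (σ ∩ D) :=
      sup_le (coneSpan_mono hCE)
        (Submodule.span_le.mpr (Set.singleton_subset_iff.mpr (mem_coneSpan_self hqE)))
    have hlt : coneSpan C < coneSpan C ⊔ Submodule.span ℝ {q} := by
      refine lt_of_le_of_ne le_sup_left fun heq => hqC ?_
      rw [heq]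
      exact Submodule.mem_sup_right (Submodule.mem_span_singleton_self q)
    have h1' : finrank ℝ ↥(coneSpan C) < finrank ℝ ↥(coneSpan C ⊔ Submodule.span ℝ {q}) :=
      Submodule.finrank_lt_finrank_of_lt hlt
    have h2' : finrank ℝ ↥(coneSpan C ⊔ Submodule.span ℝ {q}) ≤
        finrank ℝ ↥(coneSpan (σ ∩ D)) := Submodule.finrank_mono hsup
    unfold coneDim at hCd hσd ⊢
    omega
  have hE : σ ∩ D = σ :=
    X.toFan.eq_of_subset_of_dim_le hEmem hσmem Set.inter_subset_left hdimE
  have hσD : σ ⊆ D := by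
    rw [← hE]
    exact Set.inter_subset_right
  have hDσ : σ = D := by
    refine X.toFan.eq_of_subset_of_dim_le hσmem hD.1 hσD ?_
    rw [hσd]
    exact X.toFan.coneDim_le_of_pure X.pure hD.1
  exact ⟨σ', hσ'S, hDσ ▸ hD⟩

end Aux7
section Aux8

open Module Polynomial

variable {N : ℕ}

set_option maxHeartbeats 1000000 in
/-- Over any facet `τ` of `X` there is a facet `τ'` of the refinement `Y`
contained in `τ`, spanning the same space, with minimal cone `τ`. -/
lemma exists_fine_facet {n : ℕ} (hn : 1 ≤ n) (X Y : WeightedFan N n)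
    (href : IsRefinement Y X) {τ : Set (V N)}
    (hτmem : τ ∈ X.toFan.cones) (hτd : coneDim τ = n - 1) :
    ∃ τ', τ' ∈ Y.toFan.cones ∧ coneDim τ' = n - 1 ∧ τ' ⊆ τ ∧
      coneSpan τ' = coneSpan τ ∧ IsMinConeOver X.toFan τ' τ := by
  classical
  obtain ⟨D, hD, hDspan⟩ := exists_finset_span τ
  set k := D.card with hk_def
  let e : {x // x ∈ D} ≃ Fin k := Fintype.equivFinOfCardEq (Fintype.card_coe D)
  set v : Fin k → V N := fun i => (e.symm i : V N) with hv_def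
  have hvτ : ∀ i, v i ∈ τ := fun i => hD (e.symm i).2
  have hvD : ∀ x ∈ D, ∃ i, v i = x := fun x hx => ⟨e ⟨x, hx⟩, by simp [hv_def]⟩
  -- the set of "bad" cones of Y
  set T : Set (Set (V N)) :=
    {Z | Z ∈ Y.toFan.cones ∧ ¬ (coneSpan τ ≤ Submodule.span ℝ (Z ∩ τ))} with hT_def
  have hTfin : T.Finite := Y.toFan.finite.subset fun Z hZ => hZ.1
  -- for each bad cone, a functional vanishing on it within τ
  have hfun : ∀ Z : {Z // Z ∈ T}, ∃ φ : (V N) →ₗ[ℝ] ℝ, (∀ x ∈ (Z : Set (V N)) ∩ τ, φ x = 0) ∧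
      ∃ i, φ (v i) ≠ 0 := by
    intro ⟨Z, hZ⟩
    obtain ⟨w, hw, hwn⟩ := SetLike.not_le_iff_exists.mp hZ.2
    obtain ⟨φ, hφ0, hφw⟩ := exists_functional hwn
    refine ⟨φ, fun x hx => hφ0 x (Submodule.subset_span hx), ?_⟩
    by_contra hcon
    push_neg at hcon
    apply hφw
    have hvan : ∀ x ∈ (D : Set (V N)), φ x = 0 := by
      intro x hx
      obtain ⟨i, rfl⟩ := hvD x hx
      exact hcon i
    have := vanish_span hvan
    rw [hDspan] at this
    exact this w hw
  choose φf hφf1 hφf2 using hfun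
  -- the attached polynomials
  have hpoly : ∀ Z : {Z // Z ∈ T},
      ∃ P : ℝ[X], P ≠ 0 ∧ ∀ t : ℝ, P.eval t
        = φf Z (∑ i : Fin k, (t ^ ((i : ℕ) + 1)) • v i) := by
    intro Z
    obtain ⟨i, hi⟩ := hφf2 Z
    refine ⟨∑ j : Fin k, Polynomial.C (φf Z (v j)) * Polynomial.X ^ ((j : ℕ) + 1), ?_, ?_⟩
    · intro hzero
      apply hi
      have hcoeff := congrArg (fun P : ℝ[X] => P.coeff ((i : ℕ) + 1)) hzero
      simp only [finset_sum_coeff, coeff_C_mul_X_pow, coeff_zero] at hcoeff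
      rw [Finset.sum_eq_single i] at hcoeff
      · simpa using hcoeff
      · intro j _ hji
        have hne : ¬ ((i : ℕ) + 1 = (j : ℕ) + 1) := by
          intro hc
          exact hji (Fin.ext (by omega))
        rw [if_neg hne]
      · intro hc
        exact absurd (Finset.mem_univ i) hc
    · intro t
      rw [map_sum, Polynomial.eval_finset_sum]
      refine Finset.sum_congr rfl fun j _ => ?_
      rw [eval_mul, eval_C, eval_pow, eval_X, map_smul, smul_eq_mul]
      ring
  choose P hPne hPeval using hpoly
  have : Finite {Z // Z ∈ T} := hTfin.to_subtype
  have hroots : (⋃ Z : {Z // Z ∈ T}, {t : ℝ | (P Z).IsRoot t}).Finite :=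
    Set.finite_iUnion fun Z => Polynomial.finite_setOf_isRoot (hPne Z)
  obtain ⟨t, ht⟩ := ((Set.Ioi_infinite (0 : ℝ)).diff hroots).nonempty
  have htpos : (0 : ℝ) < t := ht.1
  set x₀ : V N := ∑ i : Fin k, (t ^ ((i : ℕ) + 1)) • v i with hx₀def
  have hx₀τ : x₀ ∈ τ := (X.toFan.isCone τ hτmem).sum_smul_mem
    (fun i _ => le_of_lt (pow_pos htpos _)) (fun i _ => hvτ i)
  have hx₀Z : ∀ Z ∈ T, x₀ ∉ Z := by
    intro Z hZ hx₀Z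
    apply ht.2
    refine Set.mem_iUnion.mpr ⟨⟨Z, hZ⟩, ?_⟩
    show (P ⟨Z, hZ⟩).IsRoot t
    rw [IsRoot.def, hPeval]
    exact hφf1 ⟨Z, hZ⟩ x₀ ⟨hx₀Z, hx₀τ⟩
  -- locate x₀ in a good cone of Y
  have hx₀supp : x₀ ∈ Y.toFan.support := by
    rw [href.2.1]
    unfold Fan.support
    simp only [Set.mem_iUnion, exists_prop]
    exact ⟨τ, hτmem, hx₀τ⟩
  obtain ⟨Z₀, hZ₀mem, hxZ₀⟩ : ∃ Z₀ ∈ Y.toFan.cones, x₀ ∈ Z₀ := by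
    unfold Fan.support at hx₀supp
    simpa only [Set.mem_iUnion, exists_prop] using hx₀supp
  have hZ₀good : coneSpan τ ≤ Submodule.span ℝ (Z₀ ∩ τ) := by
    by_contra hbad
    exact hx₀Z Z₀ ⟨hZ₀mem, hbad⟩ hxZ₀
  -- the minimal cone over Z₀ contains τ
  obtain ⟨D', hD'⟩ := exists_minCone X.toFan (href.1 Z₀ hZ₀mem)
  have hτD' : τ ⊆ D' := by
    have hface : IsFace (τ ∩ D') τ := X.toFan.inter_face τ hτmem D' hD'.1
    have hsub : Z₀ ∩ τ ⊆ τ ∩ D' := fun x hx => ⟨hx.2, hD'.2.1 hx.1⟩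
    have heq : τ ∩ D' = τ := hface.eq_of_span
      (le_trans hZ₀good (coneSpan_mono hsub))
    rw [← heq]
    exact Set.inter_subset_right
  obtain ⟨-, -, -, c, hcpos, hceq⟩ := X.toFan.isFace_of_subset hτmem hD'.1 hτD'
  -- the desired facet of Y
  set τ' : Set (V N) := {x ∈ Z₀ | evalForm c x = 0} with hτ'def
  have hτ'face : IsFace τ' Z₀ := isFace_inter_ker (Y.toFan.isCone Z₀ hZ₀mem) c
    (fun x hx => hcpos x (hD'.2.1 hx))
  have hτ'mem : τ' ∈ Y.toFan.cones := Y.toFan.faces_mem Z₀ hZ₀mem τ' hτ'face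
  have hτ'τ : τ' ⊆ τ := by
    intro x hx
    rw [hceq]
    exact ⟨hD'.2.1 hx.1, hx.2⟩
  have hZτ : Z₀ ∩ τ ⊆ τ' := by
    intro x hx
    refine ⟨hx.1, ?_⟩
    have := hx.2
    rw [hceq] at this
    exact this.2
  have hspan : coneSpan τ' = coneSpan τ :=
    le_antisymm (coneSpan_mono hτ'τ) (le_trans hZ₀good (coneSpan_mono hZτ))
  have hτ'd : coneDim τ' = n - 1 := by
    unfold coneDim
    rw [hspan]
    exact hτd
  refine ⟨τ', hτ'mem, hτ'd, hτ'τ, hspan, hτmem, hτ'τ, ?_⟩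
  intro E hE hτ'E
  have hface : IsFace (τ ∩ E) τ := X.toFan.inter_face τ hτmem E hE
  have heq : τ ∩ E = τ := hface.eq_of_span (by
    rw [← hspan]
    exact coneSpan_mono (Set.subset_inter hτ'τ hτ'E))
  rw [← heq]
  exact Set.inter_subset_right

end Aux8
section Aux9

open Module

variable {N : ℕ}

open Classical in
noncomputable def minConeF (F : Fan N) (A : Set (V N)) : Set (V N) :=
  if h : ∃ E, IsMinConeOver F A E then h.choose else ∅

lemma minConeF_spec {F : Fan N} {A : Set (V N)} (h : ∃ E, IsMinConeOver F A E) :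
    IsMinConeOver F A (minConeF F A) := by
  unfold minConeF
  rw [dif_pos h]
  exact h.choose_spec

lemma cone_of_dim_zero {σ : Set (V N)} (h : IsCone σ) (hd : coneDim σ = 0) :
    σ = {0} := by
  have hbot : coneSpan σ = ⊥ := Submodule.finrank_eq_zero.mp hd
  refine Set.eq_singleton_iff_unique_mem.mpr ⟨h.zero_mem, ?_⟩
  intro x hx
  have := mem_coneSpan_self hx
  rw [hbot] at this
  simpa using this

lemma trivial_tropical (X : WeightedFan N 0) : X.IsTropical := by
  intro τ hτ u hu
  have hempty : {σ | σ ∈ X.toFan.conesOfDim 0 ∧ IsFace τ σ ∧ τ ≠ σ} = ∅ := by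
    ext σ
    simp only [Set.mem_setOf_eq, Set.mem_empty_iff_false, iff_false, not_and]
    intro hσ hface hne
    apply hne
    have hτ0 : τ = {0} := cone_of_dim_zero (X.toFan.isCone τ hτ.1) (by
      have := hτ.2
      omega)
    have hσ0 : σ = {0} := cone_of_dim_zero (X.toFan.isCone σ hσ.1) hσ.2
    rw [hτ0, hσ0]
  rw [hempty, finsum_mem_empty]
  exact Submodule.zero_mem _

set_option maxHeartbeats 1000000 in
/-- If `X` is tropical, so is any refinement `Y` of it. -/
lemma isTropical_of_coarse {n : ℕ} (X Y : WeightedFan N n) (href : IsRefinement Y X)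
    (hX : X.IsTropical) : Y.IsTropical := by
  rcases Nat.eq_zero_or_pos n with rfl | hn
  · exact trivial_tropical Y
  intro τ' hτ' u' hu'
  obtain ⟨hτ'mem, hτ'd⟩ := hτ'
  obtain ⟨C, hC⟩ := exists_minCone X.toFan (href.1 τ' hτ'mem)
  have hCdle : coneDim C ≤ n := X.toFan.coneDim_le_of_pure X.pure hC.1
  have hCdge : n - 1 ≤ coneDim C := by
    have := coneDim_mono hC.2.1
    omega
  rcases (by omega : coneDim C = n - 1 ∨ coneDim C = n) with hCd | hCd
  swap
  · exact balanced_caseA hn X Y href hτ'mem hτ'd hC hCd u' hu'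
  -- Case B
  classical
  have hspanτC : coneSpan τ' = coneSpan C := span_facet_eq hC.2.1 hτ'd hCd
  set ρ : Set (V N) → Set (V N) := fun A => minConeF X.toFan A with hρdef
  have hρspec : ∀ σ' ∈ topsOver Y.toFan n τ', IsMinConeOver X.toFan σ' (ρ σ') := by
    intro σ' hσ'
    exact minConeF_spec (exists_minCone X.toFan
      (href.1 σ' ((mem_topsOver hn hτ'mem hτ'd).mp hσ').1))
  have hB1 := fun σ' (hσ' : σ' ∈ topsOver Y.toFan n τ') =>
    bridgeB1 hn X Y href hτ'mem hτ'd hC hCd hσ' (hρspec σ' hσ')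
  have hbij : Set.BijOn ρ (topsOver Y.toFan n τ') (topsOver X.toFan n C) := by
    refine ⟨fun σ' hσ' => (hB1 σ' hσ').1, ?_, ?_⟩
    · intro σ'₁ h₁ σ'₂ h₂ heq
      exact bridgeB2 hn X Y href hτ'mem hτ'd hC hCd h₁ h₂ (hρspec σ'₁ h₁)
        (heq ▸ hρspec σ'₂ h₂)
    · intro σ hσ
      obtain ⟨σ'', hσ''S, hmin⟩ := bridgeB3 hn X Y href hτ'mem hτ'd hC hCd hσ
      exact ⟨σ'', hσ''S, minCone_unique (hρspec σ'' hσ''S) hmin⟩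
  set uX : Set (V N) → V N := fun σ => u' (Function.invFunOn ρ (topsOver Y.toFan n τ') σ)
    with huXdef
  have hstep : ∀ σ ∈ topsOver X.toFan n C,
      Function.invFunOn ρ (topsOver Y.toFan n τ') σ ∈ topsOver Y.toFan n τ' ∧
      ρ (Function.invFunOn ρ (topsOver Y.toFan n τ') σ) = σ := by
    intro σ hσ
    have himg : σ ∈ ρ '' (topsOver Y.toFan n τ') := by
      rw [hbij.image_eq]
      exact hσ
    exact ⟨Function.invFunOn_mem himg, Function.invFunOn_eq himg⟩
  have hnorm : ∀ σ ∈ X.toFan.conesOfDim n, IsFace C σ → C ≠ σ → IsNormalVector C σ (uX σ) := by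
    intro σ hσc hfaceC hneC
    have hσS : σ ∈ topsOver X.toFan n C := ⟨hσc, hfaceC, hneC⟩
    obtain ⟨hmemS, hρeq⟩ := hstep σ hσS
    set σ'' := Function.invFunOn ρ (topsOver Y.toFan n τ') σ with hσ''def
    obtain ⟨hStop, hspan, hsubσ, -⟩ := hB1 σ'' hmemS
    rw [hρeq] at hspan hsubσ
    obtain ⟨hτ'face, hτ'ne⟩ := And.intro hmemS.2.1 hmemS.2.2
    have hnv : IsNormalVector τ' σ'' (u' σ'') :=
      hu' σ'' hmemS.1 hτ'face hτ'ne
    obtain ⟨huL, hugen, g', hg'0, hg'pos, hg'u⟩ := hnv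
    have hlat : coneLattice σ'' = coneLattice σ := coneLattice_congr hspan
    have hlatτ : coneLattice τ' = coneLattice C := coneLattice_congr hspanτC
    refine ⟨hlat ▸ huL, ?_, ?_⟩
    · intro x hx
      obtain ⟨kk, hkk⟩ := hugen x (hlat ▸ hx)
      exact ⟨kk, hlatτ ▸ hkk⟩
    · -- supporting functional from the face `C ≤ σ`
      obtain ⟨-, -, -, c, hcpos, hceq⟩ := hfaceC
      refine ⟨evalFormLM c, ?_, hcpos, ?_⟩
      · apply vanish_span
        intro x hx
        rw [hceq] at hx
        exact hx.2
      · -- positivity on the normal vector via the side lemma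
        have hh : ∀ x ∈ coneSpan τ', evalFormLM c x = 0 := by
          rw [hspanτC]
          apply vanish_span
          intro x hx
          rw [hceq] at hx
          exact hx.2
        have hx₀ex : ∃ x₀ ∈ σ'', 0 < evalFormLM c x₀ := by
          by_contra hcon
          push_neg at hcon
          have hsubC : σ'' ⊆ C := by
            intro x hx
            rw [hceq]
            exact ⟨hsubσ hx, le_antisymm (hcon x hx) (hcpos x (hsubσ hx))⟩
          have := coneDim_mono hsubC
          have hd'' : coneDim σ'' = n := hmemS.1.2
          omega
        obtain ⟨x₀, hx₀m, hx₀pos⟩ := hx₀ex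
        have hside := side_lemma hn hτ'face hτ'ne hmemS.1.2 hτ'd hh hx₀m
          (ne_of_gt hx₀pos) ⟨huL, hugen, g', hg'0, hg'pos, hg'u⟩
        nlinarith [hside.2]
  have hbal := hX C ⟨hC.1, hCd⟩ uX hnorm
  have htrans : (∑ᶠ σ ∈ topsOver Y.toFan n τ', Y.weight σ • u' σ)
      = ∑ᶠ σ ∈ topsOver X.toFan n C, X.weight σ • uX σ := by
    refine finsum_mem_eq_of_bijOn ρ hbij ?_
    intro σ' hσ'
    have hw : Y.weight σ' = X.weight (ρ σ') := (hB1 σ' hσ').2.2.2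
    have hinv : Function.invFunOn ρ (topsOver Y.toFan n τ') (ρ σ') = σ' :=
      hbij.injOn.leftInvOn_invFunOn hσ'
    rw [hw, huXdef]
    simp only [hinv]
  have hgoal : (∑ᶠ σ ∈ topsOver Y.toFan n τ', Y.weight σ • u' σ) ∈ coneSpan τ' := by
    rw [htrans, hspanτC]
    exact hbal
  exact hgoal

set_option maxHeartbeats 1000000 in
/-- If a refinement `Y` of `X` is tropical, so is `X`. -/
lemma isTropical_of_fine {n : ℕ} (X Y : WeightedFan N n) (href : IsRefinement Y X)
    (hY : Y.IsTropical) : X.IsTropical := by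
  rcases Nat.eq_zero_or_pos n with rfl | hn
  · exact trivial_tropical X
  intro τ hτ u hu
  obtain ⟨hτmem, hτd⟩ := hτ
  obtain ⟨τ', hτ'mem, hτ'd, hτ'τ, hspan, hmin⟩ := exists_fine_facet hn X Y href hτmem hτd
  classical
  set ρ : Set (V N) → Set (V N) := fun A => minConeF X.toFan A with hρdef
  have hρspec : ∀ σ' ∈ topsOver Y.toFan n τ', IsMinConeOver X.toFan σ' (ρ σ') := by
    intro σ' hσ'
    exact minConeF_spec (exists_minCone X.toFan
      (href.1 σ' ((mem_topsOver hn hτ'mem hτ'd).mp hσ').1))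
  have hB1 := fun σ' (hσ' : σ' ∈ topsOver Y.toFan n τ') =>
    bridgeB1 hn X Y href hτ'mem hτ'd hmin hτd hσ' (hρspec σ' hσ')
  have hbij : Set.BijOn ρ (topsOver Y.toFan n τ') (topsOver X.toFan n τ) := by
    refine ⟨fun σ' hσ' => (hB1 σ' hσ').1, ?_, ?_⟩
    · intro σ'₁ h₁ σ'₂ h₂ heq
      exact bridgeB2 hn X Y href hτ'mem hτ'd hmin hτd h₁ h₂ (hρspec σ'₁ h₁)
        (heq ▸ hρspec σ'₂ h₂)
    · intro σ hσ
      obtain ⟨σ'', hσ''S, hminσ⟩ := bridgeB3 hn X Y href hτ'mem hτ'd hmin hτd hσ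
      exact ⟨σ'', hσ''S, minCone_unique (hρspec σ'' hσ''S) hminσ⟩
  set uY : Set (V N) → V N := fun σ' => u (ρ σ') with huYdef
  have hnorm : ∀ σ' ∈ Y.toFan.conesOfDim n, IsFace τ' σ' → τ' ≠ σ' →
      IsNormalVector τ' σ' (uY σ') := by
    intro σ' hσ'c hface hne
    have hσ'S : σ' ∈ topsOver Y.toFan n τ' := ⟨hσ'c, hface, hne⟩
    obtain ⟨hStop, hspanσ, hsubσ, -⟩ := hB1 σ' hσ'S
    have hnv : IsNormalVector τ (ρ σ') (u (ρ σ')) :=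
      hu (ρ σ') hStop.1 hStop.2.1 hStop.2.2
    obtain ⟨huL, hugen, g', hg'0, hg'pos, hg'u⟩ := hnv
    have hlat : coneLattice (ρ σ') = coneLattice σ' := coneLattice_congr hspanσ.symm
    have hlatτ : coneLattice τ = coneLattice τ' := coneLattice_congr hspan.symm
    refine ⟨hlat ▸ huL, ?_, ?_⟩
    · intro x hx
      obtain ⟨kk, hkk⟩ := hugen x (hlat ▸ hx)
      exact ⟨kk, hlatτ ▸ hkk⟩
    · refine ⟨g', ?_, fun x hx => hg'pos x (hsubσ hx), hg'u⟩
      intro x hx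
      rw [hspan] at hx
      exact hg'0 x hx
  have hbal := hY τ' ⟨hτ'mem, hτ'd⟩ uY hnorm
  have htrans : (∑ᶠ σ' ∈ topsOver Y.toFan n τ', Y.weight σ' • uY σ')
      = ∑ᶠ σ ∈ topsOver X.toFan n τ, X.weight σ • u σ := by
    refine finsum_mem_eq_of_bijOn ρ hbij ?_
    intro σ' hσ'
    rw [(hB1 σ' hσ').2.2.2]
  have hgoal : (∑ᶠ σ ∈ topsOver X.toFan n τ, X.weight σ • u σ) ∈ coneSpan τ := by
    rw [← htrans, ← hspan]
    exact hbal
  exact hgoal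

end Aux9
/-- Let `(Y, ω_Y)` be a refinement of a weighted fan `(X, ω_X)`
of dimension `n` in `V`. Then `(Y, ω_Y)` is a tropical fan if and only if
`(X, ω_X)` is a tropical fan. Consequently, the property of being tropical is
well-defined on equivalence classes of weighted fans (weighted fans with a
common refinement are tropical simultaneously). -/
theorem stmt_2 (N n : ℕ) :
    (∀ X Y : WeightedFan N n, IsRefinement Y X → (Y.IsTropical ↔ X.IsTropical)) ∧
    (∀ X₁ X₂ Z : WeightedFan N n, IsRefinement Z X₁ → IsRefinement Z X₂ →
      (X₁.IsTropical ↔ X₂.IsTropical)) := by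
  constructor
  · intro X Y href
    exact ⟨fun hY => isTropical_of_fine X Y href hY,
      fun hX => isTropical_of_coarse X Y href hX⟩
  · intro X₁ X₂ Z h1 h2
    constructor
    · intro h
      exact isTropical_of_fine X₂ Z h2 (isTropical_of_coarse X₁ Z h1 h)
    · intro h
      exact isTropical_of_fine X₁ Z h1 (isTropical_of_coarse X₂ Z h2 h)

end TropFan
end

section
/- Let Γ be a finite tree with leaves labeled x_1, …, x_N, with a positive length l(E) assigned to each edge E, and let v_1, …, v_N ∈ ℤ^r with Σ_k v_k = 0. Let d be the unique balanced direction assignment on the oriented edges of Γ with the edge at leaf x_k oriented towards x_k having direction v_k, and let h be a map from the vertices of Γ to ℝ^r such that h(W) − h(V) = l(E)·d(E oriented from V to W) for every edge E with endpoints V, W. Fix i ∈ {2, …, N} and assume v_1 = v_i = 0. Then h(x_1-vertex) and h(x_i-vertex) satisfy h(x_i) = h(x_1) + (1/2)·Σ_{k=2, k≠i}^{N} (dist(x_1, x_k) − dist(x_i, x_k))·v_k, where dist(x_a, x_b) denotes the sum of the lengths of the edges on the unique path in Γ between the leaves x_a and x_b. -/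
open scoped BigOperators
open Finset SimpleGraph

set_option linter.unusedSectionVars false
namespace Stmt18Aux

variable {V : Type*} {G : SimpleGraph V}

/-- Weighted length of a walk. -/
noncomputable def wt (l : V → V → ℝ) (hl : ∀ u w, l u w = l w u) {a b : V} (p : G.Walk a b) :
    ℝ :=
  (p.edges.map (Sym2.lift ⟨l, hl⟩)).sum

lemma wt_nil (l : V → V → ℝ) (hl : ∀ u w, l u w = l w u) {a : V} :
    wt l hl (SimpleGraph.Walk.nil : G.Walk a a) = 0 := rfl

lemma wt_concat (l : V → V → ℝ) (hl : ∀ u w, l u w = l w u) {a u w : V} (p : G.Walk a u)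
    (h : G.Adj u w) : wt l hl (p.concat h) = wt l hl p + l u w := by
  simp [wt, SimpleGraph.Walk.edges_concat]

lemma wt_nonneg (l : V → V → ℝ) (hl : ∀ u w, l u w = l w u)
    (hlpos : ∀ u w, G.Adj u w → 0 < l u w) {a b : V} (p : G.Walk a b) :
    0 ≤ wt l hl p := by
  apply List.sum_nonneg
  intro y hy
  obtain ⟨e, he, rfl⟩ := List.mem_map.mp hy
  have he' : e ∈ G.edgeSet := p.edges_subset_edgeSet he
  induction e with
  | h u w => exact (hlpos u w he').le

variable [DecidableEq V] (hT : G.IsTree) (l : V → V → ℝ) (hl : ∀ u w, l u w = l w u)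

/-- The unique path between two vertices of a tree. -/
noncomputable def pth (a b : V) : G.Walk a b := (hT.existsUnique_path a b).choose

lemma pth_isPath (a b : V) : (pth hT a b).IsPath := (hT.existsUnique_path a b).choose_spec.1

lemma pth_unique {a b : V} (p : G.Walk a b) (hp : p.IsPath) : p = pth hT a b :=
  (hT.existsUnique_path a b).choose_spec.2 p hp

/-- Weighted distance in the tree. -/
noncomputable def Dd (s u : V) : ℝ := wt l hl (pth hT s u)

lemma Dd_eq {s u : V} (p : G.Walk s u) (hp : p.IsPath) : Dd hT l hl s u = wt l hl p := by
  rw [Dd, ← pth_unique hT p hp]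

lemma Dd_self (s : V) : Dd hT l hl s s = 0 := by
  rw [Dd_eq hT l hl (SimpleGraph.Walk.nil) SimpleGraph.Walk.IsPath.nil, wt_nil]

lemma Dd_nonneg (hlpos : ∀ u w, G.Adj u w → 0 < l u w) (s u : V) : 0 ≤ Dd hT l hl s u :=
  wt_nonneg l hl hlpos _

lemma concat_isPath {s u w : V} (p : G.Walk s u) (hp : p.IsPath) (h : G.Adj u w)
    (hw : w ∉ p.support) : (p.concat h).IsPath := by
  rw [← SimpleGraph.Walk.isPath_reverse_iff, SimpleGraph.Walk.reverse_concat]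
  exact hp.reverse.cons (by simpa [SimpleGraph.Walk.support_reverse] using hw)

lemma Dd_step_far {s u w : V} (h : G.Adj u w) (hw : w ∉ (pth hT s u).support) :
    Dd hT l hl s w = Dd hT l hl s u + l u w := by
  rw [Dd_eq hT l hl ((pth hT s u).concat h)
    (concat_isPath _ (pth_isPath hT s u) h hw), wt_concat]
  rfl

lemma Dd_step_near {s u w : V} (h : G.Adj u w) (hw : w ∈ (pth hT s u).support) :
    Dd hT l hl s u = Dd hT l hl s w + l w u := by
  set p := pth hT s u with hpdef
  have hp : p.IsPath := pth_isPath hT s u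
  have hq : (p.takeUntil w hw).IsPath := hp.takeUntil hw
  have hus : u ∉ (p.takeUntil w hw).support := by
    intro hu
    have h1 : (p.takeUntil w hw).takeUntil u hu = p :=
      pth_unique hT _ (hq.takeUntil hu)
    have hlen : ((p.takeUntil w hw).takeUntil u hu).length ≤ (p.takeUntil w hw).length :=
      SimpleGraph.Walk.length_takeUntil_le _ _
    have hsplit : p.length = (p.takeUntil w hw).length + (p.dropUntil w hw).length := by
      conv_lhs => rw [← p.take_spec hw]
      rw [SimpleGraph.Walk.length_append]
    have hdrop : (p.dropUntil w hw).length ≠ 0 := by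
      intro h0
      exact h.ne' (SimpleGraph.Walk.eq_of_length_eq_zero h0)
    rw [h1] at hlen
    omega
  have hconcat : (p.takeUntil w hw).concat h.symm = p :=
    pth_unique hT _ (concat_isPath _ hq h.symm hus)
  have hwt := wt_concat l hl (p.takeUntil w hw) h.symm
  rw [hconcat] at hwt
  rw [show Dd hT l hl s u = wt l hl p from rfl, hwt,
    Dd_eq hT l hl (p.takeUntil w hw) hq]

lemma Dd_dichotomy {s u w : V} (h : G.Adj u w) :
    Dd hT l hl s w = Dd hT l hl s u + l u w ∨ Dd hT l hl s u = Dd hT l hl s w + l w u := by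
  by_cases hw : w ∈ (pth hT s u).support
  · exact Or.inr (Dd_step_near hT l hl h hw)
  · exact Or.inl (Dd_step_far hT l hl h hw)

lemma near_concat (hlpos : ∀ u w, G.Adj u w → 0 < l u w) {s u w : V} (h : G.Adj u w)
    (e : Dd hT l hl s u = Dd hT l hl s w + l w u) :
    (pth hT s w).concat h.symm = pth hT s u := by
  have hnm : u ∉ (pth hT s w).support := by
    intro hu
    have h2 := Dd_step_near hT l hl h.symm hu
    have l1 := hlpos u w h
    have l2 := hlpos w u h.symm
    linarith
  exact pth_unique hT _ (concat_isPath _ (pth_isPath hT s w) h.symm hnm)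

lemma near_unique (hlpos : ∀ u w, G.Adj u w → 0 < l u w) {s u w₁ w₂ : V}
    (h₁ : G.Adj u w₁) (h₂ : G.Adj u w₂)
    (e₁ : Dd hT l hl s u = Dd hT l hl s w₁ + l w₁ u)
    (e₂ : Dd hT l hl s u = Dd hT l hl s w₂ + l w₂ u) : w₁ = w₂ := by
  have key := (near_concat hT l hl hlpos h₁ e₁).trans
    (near_concat hT l hl hlpos h₂ e₂).symm
  obtain ⟨hv, -⟩ := SimpleGraph.Walk.concat_inj key
  exact hv

lemma near_exists {s u : V} (hne : u ≠ s) :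
    ∃ w, G.Adj u w ∧ Dd hT l hl s u = Dd hT l hl s w + l w u := by
  obtain ⟨t, h, q, hq⟩ := SimpleGraph.Walk.exists_eq_cons_of_ne
    (Ne.symm (Ne.symm hne)) ((pth hT s u).reverse)
  refine ⟨t, h, ?_⟩
  have hp : (pth hT s u).IsPath := pth_isPath hT s u
  have hpr : (pth hT s u) = q.reverse.concat h.symm := by
    have := congrArg SimpleGraph.Walk.reverse hq
    rwa [SimpleGraph.Walk.reverse_reverse, SimpleGraph.Walk.reverse_cons] at this
  have hqp : q.reverse.IsPath := by
    have : ((pth hT s u).reverse).IsPath := hp.reverse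
    rw [hq] at this
    exact this.of_cons.reverse
  rw [show Dd hT l hl s u = wt l hl (pth hT s u) from rfl, hpr, wt_concat,
    Dd_eq hT l hl q.reverse hqp, hl t u]

lemma div_Dd [Fintype V] [DecidableRel G.Adj] (hlpos : ∀ u w, G.Adj u w → 0 < l u w)
    (s u : V) :
    ∑ w ∈ G.neighborFinset u, (Dd hT l hl s w - Dd hT l hl s u) / l u w
      = (G.degree u : ℝ) - (if u = s then 0 else 2) := by
  classical
  have hterm : ∀ w ∈ G.neighborFinset u, (Dd hT l hl s w - Dd hT l hl s u) / l u w
      = if Dd hT l hl s u = Dd hT l hl s w + l w u then (-1 : ℝ) else 1 := by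
    intro w hw
    have hadj : G.Adj u w := by rwa [SimpleGraph.mem_neighborFinset] at hw
    have hlu := hlpos u w hadj
    by_cases hcase : Dd hT l hl s u = Dd hT l hl s w + l w u
    · rw [if_pos hcase, hcase, hl w u]
      field_simp
      ring
    · rw [if_neg hcase]
      rcases Dd_dichotomy hT l hl hadj with h1 | h2
      · rw [h1]
        field_simp
        ring
      · exact absurd h2 hcase
  rw [Finset.sum_congr rfl hterm]
  have hsplit : ∀ w : V, (if Dd hT l hl s u = Dd hT l hl s w + l w u then (-1 : ℝ) else 1)
      = 1 - 2 * (if Dd hT l hl s u = Dd hT l hl s w + l w u then (1 : ℝ) else 0) := by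
    intro w; split <;> ring
  simp_rw [hsplit]
  rw [Finset.sum_sub_distrib, Finset.sum_const, ← Finset.mul_sum, Finset.sum_boole]
  rw [SimpleGraph.card_neighborFinset_eq_degree] at *
  by_cases hus : u = s
  · subst hus
    have : (G.neighborFinset u).filter
        (fun w => Dd hT l hl u u = Dd hT l hl u w + l w u) = ∅ := by
      rw [Finset.filter_eq_empty_iff]
      intro w hw
      have hadj : G.Adj u w := by rwa [SimpleGraph.mem_neighborFinset] at hw
      have := Dd_nonneg hT l hl hlpos u w
      have := hlpos w u hadj.symm
      rw [Dd_self]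
      intro hc
      linarith
    rw [this]
    simp
  · have : (G.neighborFinset u).filter
        (fun w => Dd hT l hl s u = Dd hT l hl s w + l w u) =
        {(near_exists hT l hl (s := s) (u := u) hus).choose} := by
      obtain ⟨hadj, he⟩ := (near_exists hT l hl (s := s) (u := u) hus).choose_spec
      ext w
      simp only [Finset.mem_filter, Finset.mem_singleton, SimpleGraph.mem_neighborFinset]
      constructor
      · rintro ⟨hw, hwe⟩
        exact near_unique hT l hl hlpos hw hadj hwe he
      · rintro rfl
        exact ⟨hadj, he⟩
    rw [this]
    simp [hus]

lemma sbp {V : Type*} [Fintype V] (G : SimpleGraph V) [DecidableRel G.Adj]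
    (c : V → V → ℝ) (hc : ∀ u w, G.Adj u w → c u w = - c w u) (φ : V → ℝ) :
    ∑ u, ∑ w ∈ G.neighborFinset u, c u w * (φ w - φ u)
      = -2 * ∑ u, φ u * ∑ w ∈ G.neighborFinset u, c u w := by
  classical
  have swap : ∀ f : V → V → ℝ,
      (∑ u, ∑ w ∈ G.neighborFinset u, f u w) = ∑ u, ∑ w ∈ G.neighborFinset u, f w u := by
    intro f
    calc ∑ u, ∑ w ∈ G.neighborFinset u, f u w
        = ∑ u, ∑ w, if G.Adj u w then f u w else 0 := by
          refine Finset.sum_congr rfl fun u _ => ?_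
          rw [SimpleGraph.neighborFinset_eq_filter, Finset.sum_filter]
      _ = ∑ w, ∑ u, if G.Adj u w then f u w else 0 := Finset.sum_comm
      _ = ∑ w, ∑ u ∈ G.neighborFinset w, f u w := by
          refine Finset.sum_congr rfl fun w _ => ?_
          rw [SimpleGraph.neighborFinset_eq_filter, Finset.sum_filter]
          exact Finset.sum_congr rfl fun u _ => if_congr (G.adj_comm u w) rfl rfl
  have h1 : ∑ u, ∑ w ∈ G.neighborFinset u, c u w * (φ w - φ u)
      = (∑ u, ∑ w ∈ G.neighborFinset u, c u w * φ w)
        - ∑ u, ∑ w ∈ G.neighborFinset u, c u w * φ u := by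
    simp_rw [mul_sub, Finset.sum_sub_distrib]
  have h2 : (∑ u, ∑ w ∈ G.neighborFinset u, c u w * φ w)
      = - ∑ u, ∑ w ∈ G.neighborFinset u, c u w * φ u := by
    rw [swap (fun u w => c u w * φ w), ← Finset.sum_neg_distrib]
    apply Finset.sum_congr rfl
    intro u _
    rw [← Finset.sum_neg_distrib]
    apply Finset.sum_congr rfl
    intro w hw
    have hadj : G.Adj u w := by rwa [SimpleGraph.mem_neighborFinset] at hw
    rw [hc u w hadj]
    ring
  rw [h1, h2]
  have h3 : ∀ u : V, ∑ w ∈ G.neighborFinset u, c u w * φ u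
      = φ u * ∑ w ∈ G.neighborFinset u, c u w := by
    intro u
    rw [Finset.mul_sum]
    exact Finset.sum_congr rfl fun w _ => by ring
  simp_rw [h3]
  ring

end Stmt18Aux

open scoped BigOperators

/-- Let `Γ` be a finite tree with leaves labeled
`x_1, …, x_N`, with a positive length `l(E)` assigned to each edge `E`, and let
`v_1, …, v_N ∈ ℤ^r` with `Σ_k v_k = 0`. Let `d` be the unique balanced direction
assignment on the oriented edges of `Γ` with the edge at leaf `x_k` oriented
towards `x_k` having direction `v_k`, and let `h` be a map from the vertices of
`Γ` to `ℝ^r` such that `h(W) − h(V) = l(E)·d(E oriented from V to W)` for every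
edge `E` with endpoints `V, W`. Fix `i ∈ {2, …, N}` and assume `v_1 = v_i = 0`.
Then `h(x_i) = h(x_1) + (1/2)·Σ_{k=2, k≠i}^{N} (dist(x_1, x_k) − dist(x_i, x_k))·v_k`,
where `dist(x_a, x_b)` denotes the sum of the lengths of the edges on the unique
path in `Γ` between the leaves `x_a` and `x_b`.

(Here the label `1` of the paper is the index `0 : Fin N`.) -/
theorem stmt_18 {V : Type*} [Fintype V] (G : SimpleGraph V) [DecidableRel G.Adj]
    (hT : G.IsTree)
    (r N : ℕ) [NeZero N]
    -- the leaves of `Γ` are `x 0, …, x (N-1)`: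
    (x : Fin N → V) (hxinj : Function.Injective x)
    (hleaf : ∀ k, G.degree (x k) = 1)
    (hallleaves : ∀ u : V, G.degree u = 1 → ∃ k, u = x k)
    -- the edge lengths:
    (l : V → V → ℝ) (hlsymm : ∀ u w, l u w = l w u)
    (hlpos : ∀ u w, G.Adj u w → 0 < l u w)
    -- the directions of the ends:
    (vK : Fin N → Fin r → ℤ) (hvsum : ∑ k, vK k = 0)
    -- `d` is the balanced direction assignment (`d u w` is the direction of the
    -- edge `{u, w}` oriented from `u` to `w`):
    (d : V → V → Fin r → ℤ)
    (hd0 : ∀ u w : V, ¬ G.Adj u w → d u w = 0)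
    (hdanti : ∀ u w : V, G.Adj u w → d u w = - d w u)
    (hdleaf : ∀ (k : Fin N) (u : V), G.Adj u (x k) → d u (x k) = vK k)
    (hdbal : ∀ u : V, 2 ≤ G.degree u → ∑ w ∈ G.neighborFinset u, d u w = 0)
    -- `h` maps the tree to `ℝ^r` with the prescribed edge directions and lengths:
    (h : V → Fin r → ℝ)
    (hh : ∀ u w : V, G.Adj u w → h w - h u = l u w • fun j => (d u w j : ℝ))
    -- `dist a b` is the sum of the edge lengths on the path from `x a` to `x b`:
    (dist : Fin N → Fin N → ℝ)
    (hdist : ∀ (a b : Fin N) (p : G.Walk (x a) (x b)), p.IsPath →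
      dist a b = (p.edges.map (Sym2.lift ⟨l, hlsymm⟩)).sum)
    -- the marked ends `x 0` and `x i` are contracted:
    (i : Fin N) (hi : i ≠ 0) (hv1 : vK 0 = 0) (hvi : vK i = 0) :
    h (x i) = h (x 0) + (1 / 2 : ℝ) •
      ∑ k ∈ (Finset.univ.erase 0).erase i,
        (dist 0 k - dist i k) • fun j => (vK k j : ℝ) := by
  classical
  have hx0i : x 0 ≠ x i := fun e => hi (hxinj e.symm)
  funext j
  set D : V → V → ℝ := Stmt18Aux.Dd hT l hlsymm with hD
  set φ : V → ℝ := fun u => D (x 0) u - D (x i) u with hφ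
  set Hj : V → ℝ := fun u => h u j with hHj
  set c1 : V → V → ℝ := fun u w => ((d u w j : ℤ) : ℝ) with hc1d
  set c2 : V → V → ℝ := fun u w => if G.Adj u w then (φ w - φ u) / l u w else 0 with hc2d
  have hc1app : ∀ u w : V, c1 u w = ((d u w j : ℤ) : ℝ) := fun u w => by rw [hc1d]
  have hc2app : ∀ u w : V, G.Adj u w → c2 u w = (φ w - φ u) / l u w := fun u w hadj => by
    rw [hc2d]; exact if_pos hadj
  have hDdist : ∀ a b : Fin N, D (x a) (x b) = dist a b := fun a b =>
    (hdist a b (Stmt18Aux.pth hT (x a) (x b)) (Stmt18Aux.pth_isPath hT (x a) (x b))).symm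
  have hφk : ∀ k : Fin N, φ (x k) = dist 0 k - dist i k := by
    intro k
    rw [hφ]
    simp only
    rw [hDdist 0 k, hDdist i k]
  have hleafnbr : ∀ k : Fin N, ∃ w, G.neighborFinset (x k) = {w} := by
    intro k
    apply Finset.card_eq_one.mp
    rw [SimpleGraph.card_neighborFinset_eq_degree]
    exact hleaf k
  -- the divergence of `c1` is concentrated at the leaves
  have hA : ∀ ψ : V → ℝ, (∑ u, ψ u * ∑ w ∈ G.neighborFinset u, c1 u w)
      = - ∑ k : Fin N, ψ (x k) * ((vK k j : ℤ) : ℝ) := by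
    intro ψ
    have hzero : ∀ u ∈ (Finset.univ : Finset V), u ∉ Finset.image x Finset.univ →
        ψ u * (∑ w ∈ G.neighborFinset u, c1 u w) = 0 := by
      intro u _ hu
      rcases Nat.lt_or_ge (G.degree u) 2 with hdeg | hdeg
      · have h1 : G.degree u ≠ 1 := by
          intro e
          obtain ⟨k, rfl⟩ := hallleaves u e
          exact hu (Finset.mem_image_of_mem x (Finset.mem_univ k))
        have h0 : G.neighborFinset u = ∅ := by
          rw [← Finset.card_eq_zero, SimpleGraph.card_neighborFinset_eq_degree]
          omega
        simp [h0]
      · have hb : ∑ w ∈ G.neighborFinset u, d u w j = 0 := by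
          have := congrFun (hdbal u hdeg) j
          rw [Finset.sum_apply] at this
          simpa using this
        have hb' : (∑ w ∈ G.neighborFinset u, c1 u w) = 0 := by
          simp only [hc1app]
          exact_mod_cast hb
        simp [hb']
    rw [← Finset.sum_subset (Finset.subset_univ (Finset.image x Finset.univ)) hzero,
      Finset.sum_image (fun a _ b _ hab => hxinj hab)]
    rw [← Finset.sum_neg_distrib]
    refine Finset.sum_congr rfl fun k _ => ?_
    obtain ⟨w, hw⟩ := hleafnbr k
    have hadj : G.Adj (x k) w := by
      rw [← SimpleGraph.mem_neighborFinset, hw]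
      exact Finset.mem_singleton_self w
    have h1 := congrFun (hdanti (x k) w hadj) j
    have h2 := congrFun (hdleaf k w hadj.symm) j
    have hd1 : d (x k) w j = - vK k j := by simpa [h2] using h1
    rw [hw, Finset.sum_singleton, hc1app, hd1]
    push_cast
    ring
  -- antisymmetry of `c1`
  have hc1 : ∀ u w : V, G.Adj u w → c1 u w = - c1 w u := by
    intro u w hadj
    have h1 := congrFun (hdanti u w hadj) j
    rw [hc1app, hc1app]
    have : d u w j = - d w u j := by simpa using h1
    rw [this]
    push_cast
    ring
  have E1 := Stmt18Aux.sbp G c1 hc1 φ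
  rw [hA φ] at E1
  -- second application
  have hc2 : ∀ u w : V, G.Adj u w → c2 u w = - c2 w u := by
    intro u w hadj
    rw [hc2app u w hadj, hc2app w u hadj.symm, hlsymm w u]
    ring
  have E2 := Stmt18Aux.sbp G c2 hc2 Hj
  have hLHS : (∑ u, ∑ w ∈ G.neighborFinset u, c2 u w * (Hj w - Hj u))
      = ∑ u, ∑ w ∈ G.neighborFinset u, c1 u w * (φ w - φ u) := by
    refine Finset.sum_congr rfl fun u _ => Finset.sum_congr rfl fun w hw => ?_
    have hadj : G.Adj u w := by rwa [SimpleGraph.mem_neighborFinset] at hw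
    have hl0 : l u w ≠ 0 := (hlpos u w hadj).ne'
    have hhj : Hj w - Hj u = l u w * ((d u w j : ℤ) : ℝ) := by
      have := congrFun (hh u w hadj) j
      simpa [hHj] using this
    rw [hc2app u w hadj, hc1app, hhj]
    field_simp
  rw [hLHS] at E2
  -- compute the divergence of `c2`
  have hdiv := Stmt18Aux.div_Dd hT l hlsymm hlpos
  simp only [← hD] at hdiv
  have hS2 : ∀ u : V, (∑ w ∈ G.neighborFinset u, c2 u w)
      = 2 * (if u = x 0 then (1 : ℝ) else 0) - 2 * (if u = x i then 1 else 0) := by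
    intro u
    have e1 : (∑ w ∈ G.neighborFinset u, c2 u w)
        = (∑ w ∈ G.neighborFinset u, (D (x 0) w - D (x 0) u) / l u w)
          - ∑ w ∈ G.neighborFinset u, (D (x i) w - D (x i) u) / l u w := by
      rw [← Finset.sum_sub_distrib]
      refine Finset.sum_congr rfl fun w hw => ?_
      have hadj : G.Adj u w := by rwa [SimpleGraph.mem_neighborFinset] at hw
      rw [hc2app u w hadj, hφ]
      simp only
      ring
    rw [e1, hdiv (x 0) u, hdiv (x i) u]
    split_ifs with hA0 hAi
    · exact absurd (hA0.symm.trans hAi) hx0i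
    · ring
    · ring
    · ring
  have hsum2 : (∑ u, Hj u * ∑ w ∈ G.neighborFinset u, c2 u w)
      = 2 * Hj (x 0) - 2 * Hj (x i) := by
    calc ∑ u, Hj u * ∑ w ∈ G.neighborFinset u, c2 u w
        = ∑ u, (2 * (if u = x 0 then Hj u else 0) - 2 * (if u = x i then Hj u else 0)) := by
          refine Finset.sum_congr rfl fun u _ => ?_
          rw [hS2 u]
          split_ifs <;> ring
      _ = 2 * Hj (x 0) - 2 * Hj (x i) := by
          rw [Finset.sum_sub_distrib, ← Finset.mul_sum, ← Finset.mul_sum,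
            Finset.sum_ite_eq' Finset.univ (x 0) (fun u => Hj u),
            Finset.sum_ite_eq' Finset.univ (x i) (fun u => Hj u)]
          simp
  rw [hsum2] at E2
  -- combine
  have Efinal : -2 * (- ∑ k : Fin N, φ (x k) * ((vK k j : ℤ) : ℝ))
      = -2 * (2 * Hj (x 0) - 2 * Hj (x i)) := E1.symm.trans E2
  have hfull : (∑ k : Fin N, φ (x k) * ((vK k j : ℤ) : ℝ))
      = ∑ k : Fin N, (dist 0 k - dist i k) * ((vK k j : ℤ) : ℝ) :=
    Finset.sum_congr rfl fun k _ => by rw [hφk k]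
  have her : (∑ k ∈ (Finset.univ.erase (0 : Fin N)).erase i,
        (dist 0 k - dist i k) * ((vK k j : ℤ) : ℝ))
      = ∑ k : Fin N, (dist 0 k - dist i k) * ((vK k j : ℤ) : ℝ) := by
    rw [Finset.sum_erase _ (by
        have : vK i j = 0 := by rw [hvi]; rfl
        rw [this]; push_cast; ring),
      Finset.sum_erase _ (by
        have : vK 0 j = 0 := by rw [hv1]; rfl
        rw [this]; push_cast; ring)]
  have hHi : Hj (x i) = h (x i) j := rfl
  have hH0 : Hj (x 0) = h (x 0) j := rfl
  simp only [Pi.add_apply, Pi.smul_apply, Finset.sum_apply, smul_eq_mul]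
  rw [her, ← hfull]
  linarith [Efinal, hHi, hH0]
end
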